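/- arXiv:1203.6047 — 7 statements merged into one kernel-verified Lean document; each statement's English description precedes it below -/
import Mathlib

section
/- Let G be a Polish group acting continuously by isometries on a metric space (X,d) with at least one unbounded orbit. Then there exist a separable Banach space E and a continuous affine isometric action of G on E all of whose orbits are unbounded. -/
open BoundedContinuousFunction TopologicalSpace Bornology Filter

namespace Statement0Aux

variable {G : Type*} [Group G] {X : Type*} [MetricSpace X] [MulAction G X]

variable (G) in
/-- The orbit of `x₀`. -/
def Orb (x₀ : X) : Set X := Set.range fun g : G => g • x₀

variable {x₀ : X}

variable (G) in
def y0 (x₀ : X) : Orb G x₀ := ⟨x₀, 1, one_smul G x₀⟩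

def act (g : G) (y : Orb G x₀) : Orb G x₀ :=
  ⟨g • (y : X), by
    obtain ⟨h, hh⟩ := y.2
    refine ⟨g * h, ?_⟩
    dsimp only at hh ⊢
    rw [mul_smul, hh]⟩

@[simp] lemma act_coe (g : G) (y : Orb G x₀) : (act g y : X) = g • (y : X) := rfl

lemma act_act (g h : G) (y : Orb G x₀) : act g (act h y) = act (g * h) y := by
  apply Subtype.ext; simp [mul_smul]

lemma act_one (y : Orb G x₀) : act (1 : G) y = y := by
  apply Subtype.ext; simp

section hiso

variable (hiso : ∀ g : G, Isometry fun x : X => g • x)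
include hiso

lemma dist_act (g : G) (y z : Orb G x₀) : dist (act g y) (act g z) = dist y z := by
  rw [Subtype.dist_eq, Subtype.dist_eq, act_coe, act_coe]
  exact (hiso g).dist_eq (y : X) (z : X)

lemma continuous_act (g : G) : Continuous (act (x₀ := x₀) g) :=
  Continuous.subtype_mk ((hiso g).continuous.comp continuous_subtype_val) _

end hiso

/-- Kuratowski-type embedding of the orbit into bounded continuous functions. -/
noncomputable def Phi (x₀ : X) (y : Orb G x₀) : (Orb G x₀) →ᵇ ℝ :=
  mkOfBound ⟨fun z => dist z y - dist z (y0 G x₀), by fun_prop⟩ (2 * dist y (y0 G x₀)) (by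
    intro z w
    have h1 : ∀ v : Orb G x₀, |dist v y - dist v (y0 G x₀)| ≤ dist y (y0 G x₀) := by
      intro v
      rw [dist_comm v y, dist_comm v (y0 G x₀)]
      exact abs_dist_sub_le _ _ _
    rw [Real.dist_eq]
    calc |(dist z y - dist z (y0 G x₀)) - (dist w y - dist w (y0 G x₀))|
        ≤ |dist z y - dist z (y0 G x₀)| + |dist w y - dist w (y0 G x₀)| := abs_sub _ _
      _ ≤ dist y (y0 G x₀) + dist y (y0 G x₀) := add_le_add (h1 z) (h1 w)
      _ = 2 * dist y (y0 G x₀) := by ring)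

@[simp] lemma Phi_apply (y z : Orb G x₀) : Phi x₀ y z = dist z y - dist z (y0 G x₀) := rfl

lemma Phi_y0 : Phi x₀ (y0 G x₀) = 0 := by
  ext z; simp

lemma dist_Phi (y z : Orb G x₀) : dist (Phi x₀ y) (Phi x₀ z) = dist y z := by
  apply le_antisymm
  · rw [dist_le dist_nonneg]
    intro w
    rw [Real.dist_eq]
    have : (dist w y - dist w (y0 G x₀)) - (dist w z - dist w (y0 G x₀)) = dist w y - dist w z := by
      ring
    rw [Phi_apply, Phi_apply, this, dist_comm w y, dist_comm w z]
    exact abs_dist_sub_le _ _ _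
  · have h := dist_coe_le_dist (f := Phi x₀ y) (g := Phi x₀ z) z
    rw [Phi_apply, Phi_apply, Real.dist_eq, dist_self] at h
    have : (dist z y - dist z (y0 G x₀)) - (0 - dist z (y0 G x₀)) = dist z y := by ring
    rw [this, abs_of_nonneg dist_nonneg, dist_comm z y] at h
    exact h

lemma isometry_Phi : Isometry (Phi (G := G) x₀) :=
  Isometry.of_dist_eq dist_Phi

lemma norm_Phi (y : Orb G x₀) : ‖Phi x₀ y‖ = dist y (y0 G x₀) := by
  rw [← dist_zero_right, ← Phi_y0 (x₀ := x₀), dist_Phi]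

section L

variable (hiso : ∀ g : G, Isometry fun x : X => g • x)
include hiso

/-- The linear isometric action on bounded continuous functions by precomposition. -/
noncomputable def L (g : G) : ((Orb G x₀) →ᵇ ℝ) →ₗ[ℝ] ((Orb G x₀) →ᵇ ℝ) where
  toFun f := f.compContinuous ⟨act g⁻¹, continuous_act hiso g⁻¹⟩
  map_add' f₁ f₂ := by ext z; simp
  map_smul' c f := by ext z; simp

lemma L_apply (g : G) (f : (Orb G x₀) →ᵇ ℝ) (z : Orb G x₀) :
    L hiso g f z = f (act g⁻¹ z) := rfl

lemma continuous_L (g : G) : Continuous (L (x₀ := x₀) hiso g) :=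
  continuous_compContinuous _

lemma norm_L (g : G) (f : (Orb G x₀) →ᵇ ℝ) : ‖L hiso g f‖ = ‖f‖ := by
  apply le_antisymm
  · rw [norm_le (norm_nonneg f)]
    intro z
    exact f.norm_coe_le_norm _
  · rw [norm_le (norm_nonneg _)]
    intro z
    have : f z = L hiso g f (act g z) := by
      rw [L_apply, act_act, inv_mul_cancel, act_one]
    rw [this]
    exact norm_coe_le_norm _ _

lemma L_one (f : (Orb G x₀) →ᵇ ℝ) : L hiso (1 : G) f = f := by
  ext z
  rw [L_apply, inv_one, act_one]

lemma L_mul (g h : G) (f : (Orb G x₀) →ᵇ ℝ) :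
    L hiso g (L hiso h f) = L hiso (g * h) f := by
  ext z
  rw [L_apply, L_apply, L_apply, act_act, ← mul_inv_rev]

lemma L_Phi (g : G) (y : Orb G x₀) :
    L hiso g (Phi x₀ y) = Phi x₀ (act g y) - Phi x₀ (act g (y0 G x₀)) := by
  ext z
  have key : ∀ w : Orb G x₀, dist (act g⁻¹ z) w = dist z (act g w) := by
    intro w
    rw [← dist_act hiso g (act g⁻¹ z) w, act_act, mul_inv_cancel, act_one]
  simp only [L_apply, Phi_apply, coe_sub, Pi.sub_apply]
  rw [key y, key (y0 G x₀)]
  ring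

end L

variable (G) in
/-- The span of the cocycle values. -/
noncomputable def M (x₀ : X) : Submodule ℝ ((Orb G x₀) →ᵇ ℝ) :=
  Submodule.span ℝ (Set.range fun g : G => Phi x₀ (act g (y0 G x₀)))

variable (G) in
noncomputable def Mc (x₀ : X) : Submodule ℝ ((Orb G x₀) →ᵇ ℝ) :=
  (M G x₀).topologicalClosure

lemma M_le_Mc : M G x₀ ≤ Mc G x₀ := (M G x₀).le_topologicalClosure

lemma Phi_mem_M (g : G) : Phi x₀ (act g (y0 G x₀)) ∈ M G x₀ :=
  Submodule.subset_span ⟨g, rfl⟩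

section invariance

variable (hiso : ∀ g : G, Isometry fun x : X => g • x)
include hiso

lemma L_mem_M (g : G) {f : (Orb G x₀) →ᵇ ℝ} (hf : f ∈ M G x₀) :
    L hiso g f ∈ M G x₀ := by
  induction hf using Submodule.span_induction with
  | mem f hf =>
    obtain ⟨h, rfl⟩ := hf
    rw [L_Phi, act_act]
    exact Submodule.sub_mem _ (Phi_mem_M (g * h)) (Phi_mem_M g)
  | zero => rw [map_zero]; exact Submodule.zero_mem _
  | add f₁ f₂ h₁ h₂ p₁ p₂ => rw [map_add]; exact Submodule.add_mem _ p₁ p₂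
  | smul c f hf p => rw [map_smul]; exact Submodule.smul_mem _ _ p

lemma L_mem_Mc (g : G) {f : (Orb G x₀) →ᵇ ℝ} (hf : f ∈ Mc G x₀) :
    L hiso g f ∈ Mc G x₀ := by
  have hf' : f ∈ closure (M G x₀ : Set ((Orb G x₀) →ᵇ ℝ)) := hf
  exact map_mem_closure (continuous_L hiso g) hf' fun y hy => L_mem_M hiso g hy

end invariance

section cont

variable [TopologicalSpace G]
variable (hcont : Continuous fun p : G × X => p.1 • p.2)
variable (hiso : ∀ g : G, Isometry fun x : X => g • x)
include hcont

lemma continuous_orbitmap : Continuous fun g : G => act (x₀ := x₀) g (y0 G x₀) :=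
  Continuous.subtype_mk (hcont.comp (continuous_id.prodMk continuous_const)) _

lemma continuous_c : Continuous fun g : G => Phi x₀ (act g (y0 G x₀)) :=
  (isometry_Phi (x₀ := x₀)).continuous.comp (continuous_orbitmap hcont)

variable [IsTopologicalGroup G]

include hiso in
lemma continuous_L_apply {f : (Orb G x₀) →ᵇ ℝ} (hf : f ∈ Mc G x₀) :
    Continuous fun g : G => L hiso g f := by
  have hM : ∀ f ∈ M G x₀, Continuous fun g : G => L hiso g f := by
    intro f hf
    induction hf using Submodule.span_induction with
    | mem f hf =>
      obtain ⟨h, rfl⟩ := hf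
      have heq : (fun g : G => L hiso g (Phi x₀ (act h (y0 G x₀))))
          = fun g : G => Phi x₀ (act (g * h) (y0 G x₀)) - Phi x₀ (act g (y0 G x₀)) := by
        funext g
        rw [L_Phi, act_act]
      rw [heq]
      exact ((continuous_c hcont).comp (continuous_mul_right h)).sub (continuous_c hcont)
    | zero =>
      simpa using continuous_const (y := (0 : (Orb G x₀) →ᵇ ℝ))
    | add f₁ f₂ h₁ h₂ p₁ p₂ =>
      simp only [map_add]; exact p₁.add p₂
    | smul c f hf p =>
      simp only [map_smul]; exact p.const_smul c
  have hf' : f ∈ closure (M G x₀ : Set ((Orb G x₀) →ᵇ ℝ)) := hf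
  obtain ⟨v, hvM, hvlim⟩ := mem_closure_iff_seq_limit.1 hf'
  have hunif : TendstoUniformly (fun (n : ℕ) (g : G) => L hiso g (v n))
      (fun g : G => L hiso g f) atTop := by
    rw [Metric.tendstoUniformly_iff]
    intro ε hε
    have : ∀ᶠ n in atTop, dist (v n) f < ε :=
      (tendsto_iff_dist_tendsto_zero.1 hvlim).eventually (Filter.Tendsto.eventually_lt_const hε
        tendsto_id) |>.mono (fun n h => by simpa using h)
    filter_upwards [this] with n hn g
    have : dist (L hiso g f) (L hiso g (v n)) = dist f (v n) := by
      rw [dist_eq_norm, ← map_sub, norm_L, dist_eq_norm]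
    rw [this, dist_comm]
    exact hn
  exact hunif.continuous (Eventually.of_forall fun n => hM (v n) (hvM n)).frequently

end cont

end Statement0Aux

open Statement0Aux

set_option maxHeartbeats 6000000 in
set_option synthInstance.maxHeartbeats 400000 in
/-- Let `G` be a Polish group acting continuously by isometries on a metric
space `(X, d)` with at least one unbounded orbit. Then there exist a separable Banach space `E`
and a continuous affine isometric action of `G` on `E` (i.e. a jointly continuous action by
surjective isometries) all of whose orbits are unbounded. -/
theorem statement0 {G : Type*} [Group G] [TopologicalSpace G] [IsTopologicalGroup G] [PolishSpace G]
    {X : Type*} [MetricSpace X] [MulAction G X]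
    (hcont : Continuous fun p : G × X => p.1 • p.2)
    (hiso : ∀ g : G, Isometry fun x : X => g • x)
    (hunb : ∃ x : X, ¬ Bornology.IsBounded (Set.range fun g : G => g • x)) :
    ∃ (E : Type) (_ : NormedAddCommGroup E) (_ : NormedSpace ℝ E) (_ : CompleteSpace E)
      (_ : TopologicalSpace.SeparableSpace E) (ρ : G → E → E),
      (∀ x : E, ρ 1 x = x) ∧
      (∀ g h : G, ∀ x : E, ρ (g * h) x = ρ g (ρ h x)) ∧
      (∀ g : G, Isometry (ρ g)) ∧
      (∀ g : G, Function.Surjective (ρ g)) ∧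
      Continuous (fun p : G × E => ρ p.1 p.2) ∧
      (∀ x : E, ¬ Bornology.IsBounded (Set.range fun g : G => ρ g x)) := by
  classical
  obtain ⟨x₀, hx₀⟩ := hunb
  -- a dense sequence in `G` and hence in the orbit
  obtain ⟨q, hq⟩ := TopologicalSpace.exists_dense_seq G
  let u : ℕ → Orb G x₀ := fun n => act (q n) (y0 G x₀)
  have hu : DenseRange u := by
    have hsurj : Function.Surjective fun g : G => act (x₀ := x₀) g (y0 G x₀) := by
      rintro ⟨y, g, rfl⟩
      exact ⟨g, rfl⟩
    exact (hsurj.denseRange).comp hq (continuous_orbitmap hcont)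
  -- the restriction map to the dense sequence, a linear isometry into a type-0 space
  let ucm : C(ℕ, Orb G x₀) := ⟨u, continuous_of_discreteTopology⟩
  have normJ : ∀ f : (Orb G x₀) →ᵇ ℝ, ‖f.compContinuous ucm‖ = ‖f‖ := by
    intro f
    apply le_antisymm
    · rw [BoundedContinuousFunction.norm_le (norm_nonneg f)]
      intro n
      exact f.norm_coe_le_norm (u n)
    · rw [BoundedContinuousFunction.norm_le (norm_nonneg _)]
      intro y
      have hsub : Set.range u ⊆ {z : Orb G x₀ | ‖f z‖ ≤ ‖f.compContinuous ucm‖} := by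
        rintro _ ⟨n, rfl⟩
        exact norm_coe_le_norm (f.compContinuous ucm) n
      have hcl : IsClosed {z : Orb G x₀ | ‖f z‖ ≤ ‖f.compContinuous ucm‖} :=
        isClosed_le f.continuous.norm continuous_const
      exact closure_minimal hsub hcl (hu y)
  let J : ((Orb G x₀) →ᵇ ℝ) →ₗᵢ[ℝ] (ℕ →ᵇ ℝ) :=
    { toLinearMap :=
        { toFun := fun f => f.compContinuous ucm
          map_add' := fun f₁ f₂ => by ext n; simp
          map_smul' := fun c f => by ext n; simp }
      norm_map' := normJ }
  -- the Banach space
  let E : Submodule ℝ (ℕ →ᵇ ℝ) := (Mc G x₀).map J.toLinearMap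
  have hMcClosed : IsClosed ((Mc G x₀ : Submodule ℝ _) : Set ((Orb G x₀) →ᵇ ℝ)) :=
    (M G x₀).isClosed_topologicalClosure
  have hEset : (E : Set (ℕ →ᵇ ℝ)) = ⇑J '' ((Mc G x₀ : Submodule ℝ _) : Set _) := rfl
  have hEComplete : IsComplete (E : Set (ℕ →ᵇ ℝ)) := by
    rw [hEset]
    exact (isComplete_image_iff J.isometry.isUniformInducing).2 hMcClosed.isComplete
  haveI : CompleteSpace E := hEComplete.completeSpace_coe
  haveI : SeparableSpace E := by
    have h0 : IsSeparable ((Mc G x₀ : Submodule ℝ _) : Set ((Orb G x₀) →ᵇ ℝ)) := by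
      have h1 : IsSeparable (Set.range fun g : G => Phi x₀ (act g (y0 G x₀))) :=
        isSeparable_range (continuous_c hcont)
      exact h1.span.closure
    have h2 : IsSeparable (E : Set (ℕ →ᵇ ℝ)) := by
      rw [hEset]
      exact h0.image J.continuous
    exact h2.separableSpace
  -- the isometric identification of `Mc` with `E`
  let jE : (Mc G x₀) →ₗᵢ[ℝ] E :=
    { toLinearMap := (J.toLinearMap.comp (Mc G x₀).subtype).codRestrict E
        (fun f => Submodule.mem_map_of_mem f.2)
      norm_map' := fun f => normJ f }
  have hjEsurj : Function.Surjective jE := by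
    rintro ⟨v, hv⟩
    obtain ⟨f, hfMc, rfl⟩ := hv
    exact ⟨⟨f, hfMc⟩, rfl⟩
  let e := LinearIsometryEquiv.ofSurjective (F := Mc G x₀) (E₂ := E) jE hjEsurj
  -- the affine action on `Mc`
  have hmem : ∀ (g : G) (f : Mc G x₀),
      L hiso g (f : (Orb G x₀) →ᵇ ℝ) + Phi x₀ (act g (y0 G x₀)) ∈ Mc G x₀ := fun g f =>
    Submodule.add_mem _ (L_mem_Mc hiso g f.2) (M_le_Mc (Phi_mem_M g))
  let ρY : G → (Mc G x₀) → (Mc G x₀) := fun g f => ⟨_, hmem g f⟩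
  let ρ : G → E → E := fun g v => e (ρY g (e.symm v))
  have hρY_coe : ∀ (g : G) (f : Mc G x₀),
      ((ρY g f : Mc G x₀) : (Orb G x₀) →ᵇ ℝ)
        = L hiso g (f : (Orb G x₀) →ᵇ ℝ) + Phi x₀ (act g (y0 G x₀)) := fun g f => rfl
  -- basic action identities on `Mc`
  have hρY_one : ∀ f : Mc G x₀, ρY 1 f = f := by
    intro f
    apply Subtype.ext
    rw [hρY_coe, L_one, act_one, Phi_y0, add_zero]
  have hρY_mul : ∀ (g h : G) (f : Mc G x₀), ρY (g * h) f = ρY g (ρY h f) := by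
    intro g h f
    apply Subtype.ext
    rw [hρY_coe, hρY_coe, hρY_coe, map_add, Statement0Aux.L_mul, L_Phi, act_act]
    abel
  have hρY_iso : ∀ g : G, Isometry (ρY g) := by
    intro g
    apply Isometry.of_dist_eq
    intro f₁ f₂
    rw [Subtype.dist_eq, Subtype.dist_eq, hρY_coe, hρY_coe, dist_eq_norm,
      add_sub_add_right_eq_sub, ← map_sub, norm_L, ← dist_eq_norm]
  -- transfer to `E`
  have hρ_one : ∀ v : E, ρ 1 v = v := by
    intro v
    show e (ρY 1 (e.symm v)) = v
    rw [hρY_one, e.apply_symm_apply]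
  have hρ_mul : ∀ (g h : G) (v : E), ρ (g * h) v = ρ g (ρ h v) := by
    intro g h v
    show e (ρY (g * h) (e.symm v)) = e (ρY g (e.symm (e (ρY h (e.symm v)))))
    rw [e.symm_apply_apply, hρY_mul]
  have hρ_iso : ∀ g : G, Isometry (ρ g) := by
    intro g
    exact e.isometry.comp ((hρY_iso g).comp e.symm.isometry)
  have hρ_surj : ∀ g : G, Function.Surjective (ρ g) := by
    intro g v
    refine ⟨ρ g⁻¹ v, ?_⟩
    rw [← hρ_mul, mul_inv_cancel, hρ_one]
  -- continuity
  have hρ_cont_left : ∀ v : E, Continuous fun g : G => ρ g v := by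
    intro v
    have h1 : Continuous fun g : G =>
        (L hiso g ((e.symm v : Mc G x₀) : (Orb G x₀) →ᵇ ℝ) + Phi x₀ (act g (y0 G x₀))) :=
      (continuous_L_apply hcont hiso (e.symm v).2).add (continuous_c hcont)
    have h2 : Continuous fun g : G => ρY g (e.symm v) := Continuous.subtype_mk h1 _
    exact e.continuous.comp h2
  have hρ_cont : Continuous fun p : G × E => ρ p.1 p.2 := by
    rw [continuous_iff_continuousAt]
    rintro ⟨g₀, v₀⟩
    have hb : ∀ p : G × E,
        dist (ρ p.1 p.2) (ρ g₀ v₀) ≤ dist p.2 v₀ + dist (ρ p.1 v₀) (ρ g₀ v₀) := by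
      intro p
      calc dist (ρ p.1 p.2) (ρ g₀ v₀)
          ≤ dist (ρ p.1 p.2) (ρ p.1 v₀) + dist (ρ p.1 v₀) (ρ g₀ v₀) := dist_triangle _ _ _
        _ = dist p.2 v₀ + dist (ρ p.1 v₀) (ρ g₀ v₀) := by rw [(hρ_iso p.1).dist_eq]
    have h1 : Tendsto (fun p : G × E => dist p.2 v₀) (nhds (g₀, v₀)) (nhds 0) := by
      have hcd : Continuous fun p : G × E => dist p.2 v₀ :=
        continuous_snd.dist continuous_const
      simpa using hcd.tendsto (g₀, v₀)
    have h2 : Tendsto (fun p : G × E => dist (ρ p.1 v₀) (ρ g₀ v₀)) (nhds (g₀, v₀)) (nhds 0) := by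
      have hcd : Continuous fun p : G × E => dist (ρ p.1 v₀) (ρ g₀ v₀) :=
        ((hρ_cont_left v₀).comp continuous_fst).dist continuous_const
      simpa using hcd.tendsto (g₀, v₀)
    unfold ContinuousAt
    rw [tendsto_iff_dist_tendsto_zero]
    apply squeeze_zero (fun p => dist_nonneg) hb
    simpa using h1.add h2
  -- all orbits are unbounded
  have hρ_unb_norm : ∀ v : E, ¬ ∃ C, ∀ g : G, ‖((ρ g v : E) : ℕ →ᵇ ℝ)‖ ≤ C := by
    rintro v ⟨C, hC⟩
    set f : Mc G x₀ := e.symm v with hf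
    apply hx₀
    have key : ∀ g : G, dist (g • x₀) x₀ ≤ C + ‖(f : (Orb G x₀) →ᵇ ℝ)‖ := by
      intro g
      have h1 : ‖((ρ g v : E) : ℕ →ᵇ ℝ)‖ ≤ C := hC g
      have h2 : ‖((ρ g v : E) : ℕ →ᵇ ℝ)‖ = ‖((ρY g f : Mc G x₀) : (Orb G x₀) →ᵇ ℝ)‖ := by
        show ‖(jE (ρY g f) : ℕ →ᵇ ℝ)‖ = _
        exact normJ _
      have h3 : ‖Phi x₀ (act g (y0 G x₀))‖
          ≤ ‖((ρY g f : Mc G x₀) : (Orb G x₀) →ᵇ ℝ)‖ + ‖(f : (Orb G x₀) →ᵇ ℝ)‖ := by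
        rw [hρY_coe]
        calc ‖Phi x₀ (act g (y0 G x₀))‖
            = ‖(L hiso g (f : (Orb G x₀) →ᵇ ℝ) + Phi x₀ (act g (y0 G x₀)))
                - L hiso g (f : (Orb G x₀) →ᵇ ℝ)‖ := by rw [add_sub_cancel_left]
          _ ≤ ‖L hiso g (f : (Orb G x₀) →ᵇ ℝ) + Phi x₀ (act g (y0 G x₀))‖
                + ‖L hiso g (f : (Orb G x₀) →ᵇ ℝ)‖ := norm_sub_le _ _
          _ = ‖L hiso g (f : (Orb G x₀) →ᵇ ℝ) + Phi x₀ (act g (y0 G x₀))‖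
                + ‖(f : (Orb G x₀) →ᵇ ℝ)‖ := by rw [norm_L]
      have h4 : ‖Phi x₀ (act g (y0 G x₀))‖ = dist (g • x₀) x₀ := by
        rw [norm_Phi, Subtype.dist_eq]
        rfl
      rw [← h4]
      calc ‖Phi x₀ (act g (y0 G x₀))‖
          ≤ ‖((ρY g f : Mc G x₀) : (Orb G x₀) →ᵇ ℝ)‖ + ‖(f : (Orb G x₀) →ᵇ ℝ)‖ := h3
        _ = ‖((ρ g v : E) : ℕ →ᵇ ℝ)‖ + ‖(f : (Orb G x₀) →ᵇ ℝ)‖ := by rw [h2]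
        _ ≤ C + ‖(f : (Orb G x₀) →ᵇ ℝ)‖ := by linarith
    apply Bornology.IsBounded.subset
      (Metric.isBounded_closedBall (x := x₀) (r := C + ‖(f : (Orb G x₀) →ᵇ ℝ)‖))
    rintro _ ⟨g, rfl⟩
    exact Metric.mem_closedBall.2 (key g)
  refine ⟨E, inferInstance, inferInstance, inferInstance, inferInstance, ρ,
    hρ_one, hρ_mul, hρ_iso, hρ_surj, hρ_cont, ?_⟩
  intro v hbdd
  obtain ⟨C, hC⟩ := (isBounded_iff_forall_norm_le (s := Set.range fun g : G => ρ g v)).1 hbdd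
  refine hρ_unb_norm v ⟨C, fun g => ?_⟩
  rw [Submodule.norm_coe]
  exact hC _ ⟨g, rfl⟩
end

section
/- Let G be a Polish group and let d be a compatible left-invariant metric on G (i.e., d induces the topology of G and d(gx,gy) = d(x,y) for all g,x,y ∈ G) which is unbounded. Then there exist a separable Banach space X and a continuous linear representation π : G → GL(X) which is unbounded, i.e., sup_{g∈G} ‖π(g)‖ = ∞. -/
set_option linter.unusedSectionVars false
set_option maxHeartbeats 4000000
set_option synthInstance.maxHeartbeats 400000

open Filter Topology BoundedContinuousFunction TopologicalSpace Set

/-- A compatible left-invariant metric on a topological group, bundled. -/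
structure S1Metric (G : Type*) [Group G] [TopologicalSpace G] where
  d : G → G → ℝ
  dsymm : ∀ x y : G, d x y = d y x
  dzero : ∀ x y : G, d x y = 0 ↔ x = y
  dtri : ∀ x y z : G, d x z ≤ d x y + d y z
  dlinv : ∀ g x y : G, d (g * x) (g * y) = d x y
  dcompat : ∀ s : Set G, IsOpen s ↔ ∀ x ∈ s, ∃ ε > 0, ∀ y : G, d x y < ε → y ∈ s

namespace S1Metric

variable {G : Type*} [Group G] [TopologicalSpace G] (m : S1Metric G)

lemma dself (x : G) : m.d x x = 0 := (m.dzero x x).2 rfl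

lemma dnonneg (x y : G) : 0 ≤ m.d x y := by
  have h := m.dtri x x y
  have h2 := m.dsymm x y
  have h3 := m.dtri x y x
  have h4 := m.dself x
  linarith

lemma d_one_inv_mul (g x : G) : m.d 1 (g⁻¹ * x) = m.d g x := by
  have := m.dlinv g 1 (g⁻¹ * x)
  simpa using this.symm

lemma abs_d_sub_le (a b x : G) : |m.d a x - m.d b x| ≤ m.d a b := by
  rw [abs_sub_le_iff]
  constructor
  · have := m.dtri a b x; linarith
  · have h := m.dtri b a x
    have h2 := m.dsymm b a
    linarith

lemma ball_isOpen (a : G) (ε : ℝ) : IsOpen {x | m.d a x < ε} := by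
  rw [m.dcompat]
  intro x hx
  refine ⟨ε - m.d a x, by simpa using hx, fun y hy => ?_⟩
  have := m.dtri a x y
  simp only [Set.mem_setOf_eq] at hx ⊢
  linarith

lemma ball_mem_nhds (a : G) {ε : ℝ} (hε : 0 < ε) : {x | m.d a x < ε} ∈ 𝓝 a :=
  (m.ball_isOpen a ε).mem_nhds (by simpa [m.dself] using hε)

lemma tendsto_d_zero (a : G) : Tendsto (fun x => m.d a x) (𝓝 a) (𝓝 0) := by
  rw [Metric.tendsto_nhds]
  intro ε hε
  filter_upwards [m.ball_mem_nhds a hε] with x hx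
  rw [Real.dist_eq, sub_zero, abs_of_nonneg (m.dnonneg a x)]
  exact hx

lemma continuous_d (a : G) : Continuous fun x => m.d a x := by
  rw [continuous_iff_continuousAt]
  intro b
  rw [ContinuousAt, tendsto_iff_norm_sub_tendsto_zero]
  apply squeeze_zero (fun x => norm_nonneg _) (g := fun x => m.d b x)
  · intro x
    rw [Real.norm_eq_abs]
    calc |m.d a x - m.d a b| = |m.d x a - m.d b a| := by rw [m.dsymm a x, m.dsymm a b]
    _ ≤ m.d x b := m.abs_d_sub_le x b a
    _ = m.d b x := m.dsymm x b
  · exact m.tendsto_d_zero b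

/-- The weight cocycle. -/
noncomputable def c (g x : G) : ℝ := (1 + m.d g x) / (1 + m.d 1 x)

lemma den_pos (x : G) : 0 < 1 + m.d 1 x := by have := m.dnonneg 1 x; linarith

lemma c_nonneg (g x : G) : 0 ≤ m.c g x :=
  div_nonneg (by have := m.dnonneg g x; linarith) (m.den_pos x).le

lemma c_le (g x : G) : m.c g x ≤ 1 + m.d g 1 := by
  rw [c, div_le_iff₀ (m.den_pos x)]
  have h1 := m.dtri g 1 x
  have h2 := m.dnonneg g 1
  have h3 := m.dnonneg 1 x
  nlinarith

lemma abs_c_le (g x : G) : |m.c g x| ≤ 1 + m.d g 1 := by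
  rw [abs_of_nonneg (m.c_nonneg g x)]; exact m.c_le g x

lemma abs_c_sub_le (a b x : G) : |m.c a x - m.c b x| ≤ m.d a b := by
  have h : m.c a x - m.c b x = (m.d a x - m.d b x) / (1 + m.d 1 x) := by
    rw [c, c, div_sub_div_same]; ring_nf
  rw [h, abs_div, abs_of_pos (m.den_pos x), div_le_iff₀ (m.den_pos x)]
  have h1 := m.abs_d_sub_le a b x
  have h2 := m.dnonneg a b
  have h3 := m.dnonneg 1 x
  nlinarith

lemma c_cocycle (g h x : G) : m.c (g * h) x = m.c g x * m.c h (g⁻¹ * x) := by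
  have e1 : m.d 1 (g⁻¹ * x) = m.d g x := m.d_one_inv_mul g x
  have e2 : m.d h (g⁻¹ * x) = m.d (g * h) x := by
    have := m.dlinv g h (g⁻¹ * x)
    simpa using this.symm
  rw [c, c, c, e1, e2]
  have h1 : (1 + m.d g x) ≠ 0 := by have := m.dnonneg g x; positivity
  have h2 : (1 + m.d 1 x) ≠ 0 := (m.den_pos x).ne'
  field_simp

lemma c_one_left (x : G) : m.c 1 x = 1 := div_self (m.den_pos x).ne'

lemma c_at_one (g : G) : m.c g 1 = 1 + m.d g 1 := by
  rw [c, m.dself 1]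
  simp


variable [IsTopologicalGroup G]

/-- The weight function, as a bounded continuous function. -/
noncomputable def cb (g : G) : G →ᵇ ℝ :=
  BoundedContinuousFunction.ofNormedAddCommGroup (m.c g)
    (by
      apply Continuous.div
      · exact continuous_const.add (m.continuous_d g)
      · exact continuous_const.add (m.continuous_d 1)
      · exact fun x => (m.den_pos x).ne')
    (1 + m.d g 1)
    (fun x => by rw [Real.norm_eq_abs]; exact m.abs_c_le g x)

@[simp] lemma cb_apply (g x : G) : m.cb g x = m.c g x := rfl

lemma norm_cb_le (g : G) : ‖m.cb g‖ ≤ 1 + m.d g 1 :=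
  BoundedContinuousFunction.norm_ofNormedAddCommGroup_le _
    (by have := m.dnonneg g 1; linarith) _

lemma norm_cb_sub_le (a b : G) : ‖m.cb a - m.cb b‖ ≤ m.d a b := by
  rw [BoundedContinuousFunction.norm_le (m.dnonneg a b)]
  intro x
  simpa [Real.norm_eq_abs] using m.abs_c_sub_le a b x

lemma continuous_cb : Continuous m.cb := by
  rw [continuous_iff_continuousAt]
  intro b
  rw [ContinuousAt, tendsto_iff_norm_sub_tendsto_zero]
  apply squeeze_zero (fun x => norm_nonneg _) (g := fun a => m.d b a)
  · intro a
    calc ‖m.cb a - m.cb b‖ ≤ m.d a b := m.norm_cb_sub_le a b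
    _ = m.d b a := m.dsymm a b
  · exact m.tendsto_d_zero b

/-- The (unweighted) translation-and-multiply operator, as a linear map. -/
noncomputable def T (g : G) : (G →ᵇ ℝ) →ₗ[ℝ] (G →ᵇ ℝ) where
  toFun u := u.compContinuous ⟨fun x => g⁻¹ * x, continuous_const.mul continuous_id⟩ * m.cb g
  map_add' u v := by ext x; simp [add_mul]
  map_smul' r u := by ext x; simp [mul_assoc]

lemma T_apply (g : G) (u : G →ᵇ ℝ) (x : G) : m.T g u x = u (g⁻¹ * x) * m.c g x := rfl

lemma norm_T_le (g : G) (u : G →ᵇ ℝ) : ‖m.T g u‖ ≤ ‖m.cb g‖ * ‖u‖ := by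
  calc ‖m.T g u‖ ≤ ‖u.compContinuous ⟨fun x => g⁻¹ * x, continuous_const.mul continuous_id⟩‖ * ‖m.cb g‖ :=
        norm_mul_le _ _
  _ ≤ ‖u‖ * ‖m.cb g‖ :=
        mul_le_mul_of_nonneg_right (BoundedContinuousFunction.norm_compContinuous_le _ _) (norm_nonneg _)
  _ = ‖m.cb g‖ * ‖u‖ := mul_comm _ _

/-- The translation-and-multiply operator, as a continuous linear map. -/
noncomputable def S (g : G) : (G →ᵇ ℝ) →L[ℝ] (G →ᵇ ℝ) :=
  LinearMap.mkContinuous (m.T g) ‖m.cb g‖ (m.norm_T_le g)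

lemma S_apply (g : G) (u : G →ᵇ ℝ) (x : G) : m.S g u x = u (g⁻¹ * x) * m.c g x := rfl

lemma norm_S_le (g : G) (u : G →ᵇ ℝ) : ‖m.S g u‖ ≤ ‖m.cb g‖ * ‖u‖ := m.norm_T_le g u

lemma S_comp (g h : G) (u : G →ᵇ ℝ) : m.S g (m.S h u) = m.S (g * h) u := by
  ext x
  rw [S_apply, S_apply, S_apply]
  have e1 : h⁻¹ * (g⁻¹ * x) = (g * h)⁻¹ * x := by rw [mul_inv_rev, mul_assoc]
  rw [e1, m.c_cocycle g h x]
  ring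

lemma S_one (u : G →ᵇ ℝ) : m.S 1 u = u := by
  ext x
  rw [S_apply, m.c_one_left]
  simp

lemma S_cb (g h : G) : m.S g (m.cb h) = m.cb (g * h) := by
  ext x
  rw [S_apply, cb_apply, cb_apply, m.c_cocycle g h x]
  ring


/-- The invariant separable closed subspace: closed span of the orbit of the constant `1`. -/
noncomputable def XS : Submodule ℝ (G →ᵇ ℝ) :=
  (Submodule.span ℝ (Set.range m.cb)).topologicalClosure

noncomputable instance : NormedAddCommGroup ↥(m.XS) := m.XS.normedAddCommGroup

noncomputable instance : NormedSpace ℝ ↥(m.XS) := m.XS.normedSpace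

lemma cb_mem_XS (g : G) : m.cb g ∈ m.XS :=
  Submodule.le_topologicalClosure _ (Submodule.subset_span ⟨g, rfl⟩)

lemma S_mem_span (g : G) : ∀ u ∈ Submodule.span ℝ (Set.range m.cb),
    m.S g u ∈ Submodule.span ℝ (Set.range m.cb) := by
  intro u hu
  induction hu using Submodule.span_induction with
  | mem x hx =>
    obtain ⟨h, rfl⟩ := hx
    rw [m.S_cb]
    exact Submodule.subset_span ⟨g * h, rfl⟩
  | zero => simp only [map_zero]; exact Submodule.zero_mem _
  | add x y _ _ hx hy => rw [map_add]; exact Submodule.add_mem _ hx hy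
  | smul r x _ hx => rw [map_smul]; exact Submodule.smul_mem _ r hx

lemma S_mem_XS (g : G) {u : G →ᵇ ℝ} (hu : u ∈ m.XS) : m.S g u ∈ m.XS := by
  have h1 : Set.MapsTo (m.S g) (Submodule.span ℝ (Set.range m.cb) : Set (G →ᵇ ℝ))
      (Submodule.span ℝ (Set.range m.cb) : Set (G →ᵇ ℝ)) := fun v hv => m.S_mem_span g v hv
  have h2 := h1.closure (m.S g).continuous
  have hu' : u ∈ closure (Submodule.span ℝ (Set.range m.cb) : Set (G →ᵇ ℝ)) := hu
  exact h2 hu'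

lemma continuous_S_span (v : G →ᵇ ℝ) (hv : v ∈ Submodule.span ℝ (Set.range m.cb)) :
    Continuous fun g : G => m.S g v := by
  induction hv using Submodule.span_induction with
  | mem x hx =>
    obtain ⟨h, rfl⟩ := hx
    have : (fun g : G => m.S g (m.cb h)) = fun g : G => m.cb (g * h) :=
      funext fun g => m.S_cb g h
    rw [this]
    exact m.continuous_cb.comp (continuous_id.mul continuous_const)
  | zero => simp only [map_zero]; exact continuous_const
  | add x y _ _ hx hy => simp only [map_add]; exact hx.add hy
  | smul r x _ hx => simp only [map_smul]; exact hx.const_smul r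

lemma continuous_S_XS (u : G →ᵇ ℝ) (hu : u ∈ m.XS) :
    Continuous fun g : G => m.S g u := by
  rw [continuous_iff_continuousAt]
  intro g₀
  rw [ContinuousAt, Metric.tendsto_nhds]
  intro ε hε
  set M : ℝ := 2 + m.d g₀ 1 with hM
  have hM2 : (2:ℝ) ≤ M := by have := m.dnonneg g₀ 1; simp only [hM]; linarith
  have hM0 : (0:ℝ) < M := by linarith
  have hu' : u ∈ closure (Submodule.span ℝ (Set.range m.cb) : Set (G →ᵇ ℝ)) := hu
  obtain ⟨v, hv, hvu⟩ := SeminormedAddCommGroup.mem_closure_iff.1 hu' (ε / (4 * M))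
    (by positivity)
  have hcv : Continuous fun g : G => m.S g v := m.continuous_S_span v hv
  have hev : ∀ᶠ g in 𝓝 g₀, ‖m.S g v - m.S g₀ v‖ < ε / 4 := by
    have h1 := Metric.tendsto_nhds.1 (hcv.tendsto g₀) (ε / 4) (by positivity)
    filter_upwards [h1] with g hg
    rwa [dist_eq_norm] at hg
  filter_upwards [hev, m.ball_mem_nhds g₀ one_pos] with g h1 h2
  have hbg : ‖m.cb g‖ ≤ M := by
    refine (m.norm_cb_le g).trans ?_
    have ht := m.dtri g g₀ 1
    have hs := m.dsymm g₀ g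
    simp only [hM]; linarith
  have hbg₀ : ‖m.cb g₀‖ ≤ M := by
    refine (m.norm_cb_le g₀).trans ?_
    simp only [hM]; linarith
  have e1 : ‖m.S g (u - v)‖ ≤ M * (ε / (4 * M)) := by
    refine (m.norm_S_le g (u - v)).trans ?_
    exact mul_le_mul hbg hvu.le (norm_nonneg _) hM0.le
  have e2 : ‖m.S g₀ (v - u)‖ ≤ M * (ε / (4 * M)) := by
    refine (m.norm_S_le g₀ (v - u)).trans ?_
    rw [norm_sub_rev]
    exact mul_le_mul hbg₀ hvu.le (norm_nonneg _) hM0.le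
  have key : ‖m.S g u - m.S g₀ u‖ ≤ ‖m.S g (u - v)‖ + ‖m.S g v - m.S g₀ v‖ + ‖m.S g₀ (v - u)‖ := by
    have hd : m.S g u - m.S g₀ u
        = m.S g (u - v) + (m.S g v - m.S g₀ v) + m.S g₀ (v - u) := by
      rw [map_sub, map_sub]; abel
    rw [hd]
    exact norm_add₃_le
  rw [dist_eq_norm]
  have hM4 : M * (ε / (4 * M)) = ε / 4 := by field_simp
  rw [hM4] at e1 e2
  calc ‖m.S g u - m.S g₀ u‖ ≤ ‖m.S g (u - v)‖ + ‖m.S g v - m.S g₀ v‖ + ‖m.S g₀ (v - u)‖ := key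
  _ < ε / 4 + ε / 4 + ε / 4 := by linarith
  _ < ε := by linarith

lemma joint_continuity :
    Continuous fun p : G × m.XS => m.S p.1 (p.2 : G →ᵇ ℝ) := by
  rw [continuous_iff_continuousAt]
  rintro ⟨g₀, u₀⟩
  rw [ContinuousAt, tendsto_iff_norm_sub_tendsto_zero]
  have bound : ∀ p : G × m.XS,
      ‖m.S p.1 (p.2 : G →ᵇ ℝ) - m.S g₀ (u₀ : G →ᵇ ℝ)‖
        ≤ ‖m.cb p.1‖ * ‖(p.2 : G →ᵇ ℝ) - (u₀ : G →ᵇ ℝ)‖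
          + ‖m.S p.1 (u₀ : G →ᵇ ℝ) - m.S g₀ (u₀ : G →ᵇ ℝ)‖ := by
    rintro ⟨g, u⟩
    have hd : m.S g (u : G →ᵇ ℝ) - m.S g₀ (u₀ : G →ᵇ ℝ)
        = m.S g ((u : G →ᵇ ℝ) - (u₀ : G →ᵇ ℝ)) + (m.S g (u₀ : G →ᵇ ℝ) - m.S g₀ (u₀ : G →ᵇ ℝ)) := by
      rw [map_sub]; abel
    rw [hd]
    exact (norm_add_le _ _).trans (add_le_add (m.norm_S_le g _) le_rfl)
  apply squeeze_zero (fun p => norm_nonneg _) bound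
  have hcont : Continuous fun p : G × m.XS =>
      ‖m.cb p.1‖ * ‖(p.2 : G →ᵇ ℝ) - (u₀ : G →ᵇ ℝ)‖
        + ‖m.S p.1 (u₀ : G →ᵇ ℝ) - m.S g₀ (u₀ : G →ᵇ ℝ)‖ := by
    apply Continuous.add
    · exact ((m.continuous_cb.comp continuous_fst).norm).mul
        (((continuous_subtype_val.comp continuous_snd).sub continuous_const).norm)
    · exact (((m.continuous_S_XS (u₀ : G →ᵇ ℝ) u₀.2).comp continuous_fst).sub
        continuous_const).norm
  have := hcont.tendsto (g₀, u₀)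
  simpa using this


/-- Restriction of `S g` to the invariant subspace. -/
noncomputable def piL (g : G) : m.XS →L[ℝ] m.XS :=
  ((m.S g).comp m.XS.subtypeL).codRestrict m.XS (fun u => m.S_mem_XS g u.2)

lemma piL_coe (g : G) (u : m.XS) : (m.piL g u : G →ᵇ ℝ) = m.S g (u : G →ᵇ ℝ) := rfl

/-- `S g` as a continuous linear automorphism of the invariant subspace. -/
noncomputable def piE (g : G) : m.XS ≃L[ℝ] m.XS :=
  ContinuousLinearEquiv.equivOfInverse (m.piL g) (m.piL g⁻¹)
    (fun u => Subtype.ext (by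
      show m.S g⁻¹ (m.S g (u : G →ᵇ ℝ)) = (u : G →ᵇ ℝ)
      rw [m.S_comp, inv_mul_cancel, m.S_one]))
    (fun u => Subtype.ext (by
      show m.S g (m.S g⁻¹ (u : G →ᵇ ℝ)) = (u : G →ᵇ ℝ)
      rw [m.S_comp, mul_inv_cancel, m.S_one]))

lemma piE_coe (g : G) (u : m.XS) : ((m.piE g u : m.XS) : G →ᵇ ℝ) = m.S g (u : G →ᵇ ℝ) := rfl

/-- The representation as a monoid homomorphism `G →* (XS ≃L[ℝ] XS)`. -/
noncomputable def piH : G →* (m.XS ≃L[ℝ] m.XS) :=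
  MonoidHom.mk' m.piE (fun g h => by
    refine ContinuousLinearEquiv.ext (funext fun u => Subtype.ext ?_)
    show m.S (g * h) (u : G →ᵇ ℝ) = m.S g (m.S h (u : G →ᵇ ℝ))
    rw [m.S_comp])

lemma piH_coe (g : G) (u : m.XS) : ((m.piH g u : m.XS) : G →ᵇ ℝ) = m.S g (u : G →ᵇ ℝ) := rfl

lemma piH_continuous : Continuous fun p : G × m.XS => m.piH p.1 p.2 := by
  apply Continuous.subtype_mk
  exact m.joint_continuity

/-- The distinguished vector: the constant function `1`. -/
noncomputable def ce : m.XS := ⟨m.cb 1, m.cb_mem_XS 1⟩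

lemma norm_ce : ‖m.ce‖ = 1 := by
  have h : ‖m.ce‖ = ‖m.cb 1‖ := rfl
  rw [h]
  apply le_antisymm
  · rw [BoundedContinuousFunction.norm_le zero_le_one]
    intro x
    simp [m.c_one_left]
  · have := BoundedContinuousFunction.norm_coe_le_norm (m.cb 1) 1
    simpa [m.c_one_left] using this

lemma piH_ce_norm (g : G) : 1 + m.d g 1 ≤ ‖m.piH g m.ce‖ := by
  have h1 : ‖m.piH g m.ce‖ = ‖m.cb g‖ := by
    have h0 : ((m.piH g m.ce : m.XS) : G →ᵇ ℝ) = m.cb g := by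
      rw [m.piH_coe]
      show m.S g (m.cb 1) = m.cb g
      rw [m.S_cb, mul_one]
    rw [show ‖m.piH g m.ce‖ = ‖((m.piH g m.ce : m.XS) : G →ᵇ ℝ)‖ from rfl, h0]
  have h2 : 1 + m.d g 1 ≤ ‖m.cb g‖ := by
    have := BoundedContinuousFunction.norm_coe_le_norm (m.cb g) 1
    rw [cb_apply, m.c_at_one, Real.norm_eq_abs,
      abs_of_nonneg (by have := m.dnonneg g 1; linarith)] at this
    exact this
  rw [h1]; exact h2

end S1Metric

/-- Transfer a continuous representation on a separable Banach space down to `Type 0`. -/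
theorem exists_type0_rep {Y : Type*} [NormedAddCommGroup Y] [NormedSpace ℝ Y] [CompleteSpace Y]
    [SeparableSpace Y] {G : Type*} [Group G] [TopologicalSpace G]
    (ρ : G →* (Y ≃L[ℝ] Y)) (hc : Continuous fun p : G × Y => ρ p.1 p.2)
    (hn : ∀ C : ℝ, ∃ g : G, C < ‖(ρ g : Y →L[ℝ] Y)‖) :
    ∃ (X : Type) (_ : NormedAddCommGroup X) (_ : NormedSpace ℝ X) (_ : CompleteSpace X)
      (_ : TopologicalSpace.SeparableSpace X) (π : G →* (X ≃L[ℝ] X)),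
      Continuous (fun p : G × X => π p.1 p.2) ∧
      (∀ C : ℝ, ∃ g : G, C < ‖(π g : X →L[ℝ] X)‖) := by
  haveI hsmall : Small.{0} Y :=
    small_of_injective (kuratowskiEmbedding.isometry Y).injective
  let X : Type := Shrink.{0} Y
  let eL0 : X ≃ₗ[ℝ] Y := Shrink.linearEquiv ℝ Y
  letI : NormedAddCommGroup X := inferInstance
  letI : NormedSpace ℝ X := inferInstance
  have hnorm : ∀ x : X, ‖x‖ = ‖eL0 x‖ := fun x => rfl
  have hisom : Isometry (eL0 : X → Y) :=
    AddMonoidHomClass.isometry_of_norm eL0.toLinearMap (fun x => rfl)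
  have hisom' : Isometry (eL0.symm : Y → X) := by
    intro a b
    have := hisom (eL0.symm a) (eL0.symm b)
    simpa [LinearEquiv.apply_symm_apply] using this.symm
  let E : X ≃L[ℝ] Y :=
    { eL0 with
      continuous_toFun := hisom.continuous
      continuous_invFun := hisom'.continuous }
  have hEnorm : ∀ x : X, ‖x‖ = ‖E x‖ := hnorm
  have hEsymm_norm : ∀ y : Y, ‖E.symm y‖ = ‖y‖ := by
    intro y
    rw [hEnorm (E.symm y), ContinuousLinearEquiv.apply_symm_apply]
  let ee : X ≃ᵢ Y := ⟨eL0.toEquiv, hisom⟩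
  haveI hcomX : CompleteSpace X := ee.completeSpace_iff.2 ‹_›
  haveI hsepX : SeparableSpace X :=
    ee.symm.surjective.denseRange.separableSpace ee.symm.continuous
  let π : G →* (X ≃L[ℝ] X) :=
    MonoidHom.mk' (fun g => E.trans ((ρ g).trans E.symm)) (by
      intro g h
      refine ContinuousLinearEquiv.ext (funext fun x => ?_)
      show E.symm ((ρ (g * h)) (E x))
        = E.symm ((ρ g) (E (E.symm ((ρ h) (E x)))))
      rw [map_mul, ContinuousLinearEquiv.apply_symm_apply]
      rfl)
  have hπ : ∀ (g : G) (x : X), π g x = E.symm (ρ g (E x)) := fun _ _ => rfl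
  refine ⟨X, inferInstance, inferInstance, inferInstance, inferInstance, π, ?_, ?_⟩
  · have heq : (fun p : G × X => π p.1 p.2) = fun p : G × X => E.symm (ρ p.1 (E p.2)) := rfl
    rw [heq]
    exact E.symm.continuous.comp (hc.comp
      (continuous_fst.prodMk (E.continuous.comp continuous_snd)))
  · intro C
    obtain ⟨g, hg⟩ := hn C
    refine ⟨g, lt_of_lt_of_le hg ?_⟩
    refine ContinuousLinearMap.opNorm_le_bound _ (norm_nonneg _) (fun v => ?_)
    have h1 : (ρ g : Y →L[ℝ] Y) v = E (π g (E.symm v)) := by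
      rw [hπ g (E.symm v), ContinuousLinearEquiv.apply_symm_apply,
        ContinuousLinearEquiv.apply_symm_apply]
      rfl
    rw [h1, ← hEnorm (π g (E.symm v))]
    have h2 : (π g) (E.symm v) = (π g : X →L[ℝ] X) (E.symm v) := rfl
    rw [h2]
    calc ‖(π g : X →L[ℝ] X) (E.symm v)‖ ≤ ‖(π g : X →L[ℝ] X)‖ * ‖E.symm v‖ :=
          ContinuousLinearMap.le_opNorm _ _
    _ = ‖(π g : X →L[ℝ] X)‖ * ‖v‖ := by rw [hEsymm_norm]

/-- Let `G` be a Polish group and `d` a compatible left-invariant metric on `G`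
which is unbounded. Then there exist a separable Banach space `X` and a continuous linear
representation `π : G → GL(X)` (jointly continuous action by invertible bounded operators)
which is unbounded, i.e. `sup_{g ∈ G} ‖π(g)‖ = ∞`. -/
theorem statement1 {G : Type*} [Group G] [TopologicalSpace G] [IsTopologicalGroup G] [PolishSpace G]
    (d : G → G → ℝ)
    (hsymm : ∀ x y : G, d x y = d y x)
    (hzero : ∀ x y : G, d x y = 0 ↔ x = y)
    (htri : ∀ x y z : G, d x z ≤ d x y + d y z)
    (hinv : ∀ g x y : G, d (g * x) (g * y) = d x y)
    (hcompat : ∀ s : Set G, IsOpen s ↔ ∀ x ∈ s, ∃ ε > 0, ∀ y : G, d x y < ε → y ∈ s)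
    (hunbdd : ∀ C : ℝ, ∃ g h : G, C < d g h) :
    ∃ (X : Type) (_ : NormedAddCommGroup X) (_ : NormedSpace ℝ X) (_ : CompleteSpace X)
      (_ : TopologicalSpace.SeparableSpace X) (π : G →* (X ≃L[ℝ] X)),
      Continuous (fun p : G × X => π p.1 p.2) ∧
      (∀ C : ℝ, ∃ g : G, C < ‖(π g : X →L[ℝ] X)‖) := by
  classical
  let m : S1Metric G := ⟨d, hsymm, hzero, htri, hinv, hcompat⟩
  haveI hsepXS : SeparableSpace ↥(m.XS) := by
    have h1 : IsSeparable (Set.range m.cb) := isSeparable_range m.continuous_cb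
    have h2 : IsSeparable (Submodule.span ℝ (Set.range m.cb) : Set (G →ᵇ ℝ)) := h1.span
    have h3 : IsSeparable ((m.XS : Submodule ℝ (G →ᵇ ℝ)) : Set (G →ᵇ ℝ)) := by
      rw [S1Metric.XS, Submodule.topologicalClosure_coe]
      exact h2.closure
    exact h3.separableSpace
  haveI hcomXS : CompleteSpace ↥(m.XS) := by
    have : IsClosed ((m.XS : Submodule ℝ (G →ᵇ ℝ)) : Set (G →ᵇ ℝ)) :=
      Submodule.isClosed_topologicalClosure _
    exact this.completeSpace_coe
  apply exists_type0_rep m.piH m.piH_continuous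
  intro C
  obtain ⟨g0, h0, hgh⟩ := hunbdd C
  refine ⟨g0⁻¹ * h0, ?_⟩
  set a : G := g0⁻¹ * h0 with hadef
  have ha : C < m.d a 1 := by
    have h1 := m.dlinv g0 a 1
    have h2 : g0 * a = h0 := by rw [hadef, mul_inv_cancel_left]
    rw [h2, mul_one] at h1
    have h3 : m.d h0 g0 = m.d g0 h0 := m.dsymm h0 g0
    have h4 : m.d g0 h0 = d g0 h0 := rfl
    rw [← h1, h3, h4]
    exact hgh
  have hlow := m.piH_ce_norm a
  have hop : ‖m.piH a m.ce‖ ≤ ‖(m.piH a : m.XS →L[ℝ] m.XS)‖ * ‖m.ce‖ := by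
    have h5 : (m.piH a) m.ce = (m.piH a : m.XS →L[ℝ] m.XS) m.ce := rfl
    rw [h5]
    exact ContinuousLinearMap.le_opNorm _ _
  rw [m.norm_ce, mul_one] at hop
  linarith
end

section
/- For a Polish group G the following are equivalent: (1) G is bounded; (2) every left-uniformly continuous function φ : G → ℝ is bounded; (3) G has property (OB) and every open subgroup of G has finite index. -/
open Pointwise

universe u

/-- A topological group has property (OB) if every continuous action of `G` by isometries on a
metric space has all orbits bounded. -/
def HasPropertyOB (G : Type u) [Group G] [TopologicalSpace G] : Prop :=
  ∀ (X : Type u) [MetricSpace X] (ρ : G → X → X),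
    (∀ x : X, ρ 1 x = x) →
    (∀ g h : G, ∀ x : X, ρ (g * h) x = ρ g (ρ h x)) →
    (∀ g : G, Isometry (ρ g)) →
    Continuous (fun p : G × X => ρ p.1 p.2) →
    ∀ x : X, Bornology.IsBounded (Set.range fun g : G => ρ g x)

/-- A topological group `G` is bounded if for every open neighbourhood `V` of the identity there
are a finite set `F ⊆ G` and `k ≥ 1` with `G = F V^k`. -/
def BoundedTopGroup (G : Type u) [Group G] [TopologicalSpace G] : Prop :=
  ∀ V : Set G, IsOpen V → (1 : G) ∈ V →
    ∃ F : Set G, F.Finite ∧ ∃ k : ℕ, 1 ≤ k ∧ F * V ^ k = Set.univ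

/-- `φ : G → ℝ` is left-uniformly continuous. -/
def LeftUniformlyCts {G : Type u} [Group G] [TopologicalSpace G] (φ : G → ℝ) : Prop :=
  ∀ ε : ℝ, 0 < ε → ∃ V : Set G, IsOpen V ∧ (1 : G) ∈ V ∧
    ∀ x y : G, x⁻¹ * y ∈ V → |φ x - φ y| < ε

open Filter Set Uniformity Topology

lemma exists_left_metric (G : Type u) [Group G] [TopologicalSpace G] [IsTopologicalGroup G]
    [FirstCountableTopology G] :
    ∃ δ : G → G → ℝ,
      (∀ x, δ x x = 0) ∧ (∀ x y, δ x y = δ y x) ∧ (∀ x y z, δ x z ≤ δ x y + δ y z) ∧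
      (∀ x y, 0 ≤ δ x y) ∧
      (∀ ε : ℝ, 0 < ε → ∃ U : Set G, IsOpen U ∧ (1:G) ∈ U ∧ ∀ x y : G, x⁻¹*y ∈ U → δ x y < ε) ∧
      (∀ U : Set G, IsOpen U → (1:G) ∈ U → ∃ ε : ℝ, 0 < ε ∧ ∀ x y : G, δ x y < ε → x⁻¹*y ∈ U) := by
  letI Ru : UniformSpace G := IsTopologicalGroup.rightUniformSpace G
  have hcg : (𝓤 G).IsCountablyGenerated := by
    rw [uniformity_eq_comap_nhds_one']
    infer_instance
  letI I : PseudoMetricSpace G := UniformSpace.pseudoMetricSpace G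
  have hU : 𝓤 G = comap (fun p : G × G => p.2 / p.1) (𝓝 (1:G)) := by
    rw [uniformity_eq_comap_nhds_one' G]; simp only [div_eq_mul_inv]
  refine ⟨fun x y => dist x⁻¹ y⁻¹, fun x => by simp, fun x y => dist_comm _ _,
    fun x y z => dist_triangle _ _ _, fun x y => dist_nonneg, ?_, ?_⟩
  · intro ε hε
    have h1 : {p : G × G | dist p.1 p.2 < ε} ∈ 𝓤 G := Metric.dist_mem_uniformity hε
    rw [hU, mem_comap] at h1
    obtain ⟨T, hT, hsub⟩ := h1
    obtain ⟨U, hUT, hUo, h1U⟩ := mem_nhds_iff.mp hT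
    refine ⟨U⁻¹, hUo.inv, by rw [Set.mem_inv]; simpa using h1U, fun x y hxy => ?_⟩
    have hmem : y⁻¹ * x ∈ U := by
      rw [Set.mem_inv] at hxy
      simpa [mul_inv_rev] using hxy
    have hT' : (x⁻¹, y⁻¹) ∈ (fun p : G × G => p.2 / p.1) ⁻¹' T := by
      simp only [Set.mem_preimage, div_eq_mul_inv, inv_inv]
      exact hUT hmem
    exact hsub hT'
  · intro U hUo h1U
    have hpre : (fun p : G × G => p.2 / p.1) ⁻¹' U⁻¹ ∈ 𝓤 G := by
      rw [hU]
      exact preimage_mem_comap (hUo.inv.mem_nhds (by rw [Set.mem_inv]; simpa using h1U))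
    obtain ⟨ε, hε, h⟩ := Metric.mem_uniformity_dist.mp hpre
    refine ⟨ε, hε, fun x y hxy => ?_⟩
    have h2 := h (a := x⁻¹) (b := y⁻¹) hxy
    simp only [Set.mem_preimage, div_eq_mul_inv, inv_inv] at h2
    -- h2 : y⁻¹ * x ∈ U⁻¹
    rw [Set.mem_inv] at h2
    simpa [mul_inv_rev] using h2

section helpers

variable {G : Type u} [Group G]

lemma inv_mem_pow {W : Set G} (hsym : W⁻¹ = W) {k : ℕ} {x : G} (hx : x ∈ W ^ k) :
    x⁻¹ ∈ W ^ k := by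
  induction k generalizing x with
  | zero => simp at hx; simp [hx]
  | succ n ih =>
    rw [pow_succ] at hx
    obtain ⟨a, ha, b, hb, rfl⟩ := hx
    have ha' := ih ha
    have hb' : b⁻¹ ∈ W := by rw [← hsym]; simpa using hb
    rw [mul_inv_rev, pow_succ']
    exact Set.mul_mem_mul hb' ha'

lemma min_one_lipschitz (a b : ℝ) : |min 1 a - min 1 b| ≤ |a - b| := by
  rcases le_total a b with hab | hab
  · rcases le_total 1 a with h1a | h1a
    · rw [min_eq_left h1a, min_eq_left (h1a.trans hab)]
      simpa using abs_nonneg (a - b)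
    · rcases le_total 1 b with h1b | h1b
      · rw [min_eq_right h1a, min_eq_left h1b]
        rw [abs_of_nonpos (by linarith), abs_of_nonpos (by linarith)]; linarith
      · rw [min_eq_right h1a, min_eq_right h1b]
  · rcases le_total 1 b with h1b | h1b
    · rw [min_eq_left h1b, min_eq_left (h1b.trans hab)]
      simpa using abs_nonneg (a - b)
    · rcases le_total 1 a with h1a | h1a
      · rw [min_eq_right h1b, min_eq_left h1a]
        rw [abs_of_nonneg (by linarith), abs_of_nonneg (by linarith)]; linarith
      · rw [min_eq_right h1b, min_eq_right h1a]

end helpers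


lemma exists_unbounded_luc_of_findex (G : Type u) [Group G] [TopologicalSpace G]
    [IsTopologicalGroup G] [FirstCountableTopology G]
    (W : Set G) (hWo : IsOpen W) (h1W : (1:G) ∈ W) (hsym : W⁻¹ = W)
    (F₀ : Set G)
    (hcov : ∀ x : G, ∃ k, x ∈ F₀ * W ^ k)
    (hbad : ∀ k, F₀ * W ^ k ≠ Set.univ) :
    ∃ φ : G → ℝ, LeftUniformlyCts φ ∧ (∀ C : ℝ, ∃ g, C < |φ g|) ∧
      (∀ g w : G, w ∈ W → |φ g - φ (g*w)| ≤ 3) := by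
  classical
  obtain ⟨δ, hrefl, hsymm, htri, hnonneg, halpha, hbeta⟩ := exists_left_metric G
  obtain ⟨c, hc, hcW⟩ := hbeta W hWo h1W
  set E : ℕ → Set G := fun k => F₀ * W ^ k with hE
  -- basic facts about E
  have hF₀ne : F₀.Nonempty := by
    obtain ⟨k, hk⟩ := hcov 1
    obtain ⟨f, hf, w, hw, _⟩ := hk
    exact ⟨f, hf⟩
  have hEne : ∀ k, (E k).Nonempty := by
    intro k
    obtain ⟨f, hf⟩ := hF₀ne
    exact ⟨f * 1, Set.mul_mem_mul hf (Set.one_mem_pow h1W)⟩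
  have hEmono : ∀ {k l : ℕ}, k ≤ l → E k ⊆ E l := by
    intro k l hkl x hx
    obtain ⟨f, hf, w, hw, rfl⟩ := hx
    exact Set.mul_mem_mul hf (Set.pow_subset_pow_right h1W hkl hw)
  have hEstep : ∀ {k : ℕ} {x w : G}, x ∈ E k → w ∈ W → x * w ∈ E (k+1) := by
    intro k x w hx hw
    obtain ⟨f, hf, v, hv, rfl⟩ := hx
    rw [mul_assoc]
    exact Set.mul_mem_mul hf (by rw [pow_succ]; exact Set.mul_mem_mul hv hw)
  -- the level function m
  have hex : ∀ x : G, ∃ k, x ∈ E k := hcov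
  set m : G → ℕ := fun x => Nat.find (hex x) with hm
  have hmE : ∀ x, x ∈ E (m x) := fun x => Nat.find_spec (hex x)
  have hm_le : ∀ {x k}, x ∈ E k → m x ≤ k := fun {x k} h => Nat.find_min' (hex x) h
  have hm_not : ∀ {x k}, k < m x → x ∉ E k := fun {x k} h => Nat.find_min (hex x) h
  have hm_notle : ∀ {x k}, x ∉ E k → k < m x := by
    intro x k h
    by_contra hle
    exact h (hEmono (Nat.le_of_not_lt hle) (hmE x))
  have hm_step : ∀ {x w}, w ∈ W → m (x * w) ≤ m x + 1 :=
    fun {x w} hw => hm_le (hEstep (hmE x) hw)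
  have hm_step' : ∀ {x w}, w ∈ W → m x ≤ m (x * w) + 1 := by
    intro x w hw
    have hw' : w⁻¹ ∈ W := by rw [← hsym]; simpa using hw
    have := hm_le (hEstep (hmE (x * w)) hw')
    simpa [mul_assoc] using this
  have hm_diff : ∀ {x y : G}, x⁻¹ * y ∈ W → m y ≤ m x + 1 ∧ m x ≤ m y + 1 := by
    intro x y hxy
    have h1 : x * (x⁻¹ * y) = y := by group
    constructor
    · have := hm_step (x := x) hxy; rwa [h1] at this
    · have := hm_step' (x := x) hxy; rwa [h1] at this
  -- distance to E k
  set di : ℕ → G → ℝ := fun k x => sInf ((δ x) '' (E k)) with hdi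
  have hdi_bdd : ∀ k x, BddBelow ((δ x) '' (E k)) := by
    intro k x
    exact ⟨0, fun r ⟨y, _, hy⟩ => hy ▸ hnonneg x y⟩
  have hdi_ne : ∀ k x, ((δ x) '' (E k)).Nonempty := fun k x => (hEne k).image _
  have hdi_nonneg : ∀ k x, 0 ≤ di k x := by
    intro k x
    exact le_csInf (hdi_ne k x) (fun r ⟨y, _, hy⟩ => hy ▸ hnonneg x y)
  have hdi_le : ∀ {k x y}, y ∈ E k → di k x ≤ δ x y :=
    fun {k x y} hy => csInf_le (hdi_bdd k x) ⟨y, hy, rfl⟩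
  have hdi_zero : ∀ {k x}, x ∈ E k → di k x = 0 := by
    intro k x hx
    refine le_antisymm ?_ (hdi_nonneg k x)
    have := hdi_le (x := x) hx
    rwa [hrefl x] at this
  have hdi_lip : ∀ k (x y : G), di k x ≤ di k y + δ x y := by
    intro k x y
    have : ∀ z ∈ E k, di k x - δ x y ≤ δ y z := by
      intro z hz
      have h1 : di k x ≤ δ x z := hdi_le hz
      have h2 : δ x z ≤ δ x y + δ y z := htri x y z
      linarith
    have h3 : di k x - δ x y ≤ di k y :=
      le_csInf (hdi_ne k y) (fun r ⟨z, hz, hr⟩ => hr ▸ this z hz)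
    linarith
  have hdi_big : ∀ {k x}, x ∉ E (k+1) → c ≤ di k x := by
    intro k x hx
    by_contra hlt
    push_neg at hlt
    obtain ⟨r, ⟨y, hy, rfl⟩, hr⟩ := (csInf_lt_iff (hdi_bdd k x) (hdi_ne k x)).mp hlt
    have : y⁻¹ * x ∈ W := hcW y x (by rwa [← hsymm] at hr)
    exact hx (by simpa [mul_assoc] using hEstep hy this)
  -- the functions u k
  set uf : ℕ → G → ℝ := fun k x => min 1 (di k x / c) with huf
  have hu_nonneg : ∀ k x, 0 ≤ uf k x :=
    fun k x => le_min zero_le_one (div_nonneg (hdi_nonneg k x) hc.le)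
  have hu_le_one : ∀ k x, uf k x ≤ 1 := fun k x => min_le_left _ _
  have hu_zero : ∀ {k x}, x ∈ E k → uf k x = 0 := by
    intro k x hx
    simp [huf, hdi_zero hx, hc.le]
  have hu_one : ∀ {k x}, x ∉ E (k+1) → uf k x = 1 := by
    intro k x hx
    have : (1:ℝ) ≤ di k x / c := (one_le_div hc).mpr (hdi_big hx)
    simp [huf, min_eq_left this]
  have hu_lip : ∀ k (x y : G), |uf k x - uf k y| ≤ δ x y / c := by
    intro k x y
    have h1 : di k x - di k y ≤ δ x y := by
      have := hdi_lip k x y; linarith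
    have h2 : di k y - di k x ≤ δ x y := by
      have := hdi_lip k y x; rw [hsymm y x] at this; linarith
    calc |uf k x - uf k y| ≤ |di k x / c - di k y / c| := min_one_lipschitz _ _
      _ = |di k x - di k y| / c := by rw [← sub_div, abs_div, abs_of_pos hc]
      _ ≤ δ x y / c := by gcongr; exact abs_sub_le_iff.mpr ⟨h1, h2⟩
  -- the function φ
  set φ : G → ℝ := fun x => ∑ k ∈ Finset.range (m x), uf k x with hφ
  have hφeq : ∀ (x : G) (M : ℕ), m x ≤ M → φ x = ∑ k ∈ Finset.range M, uf k x := by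
    intro x M hM
    refine Finset.sum_subset (Finset.range_subset_range.mpr hM) ?_
    intro k _ hk
    rw [Finset.mem_range, not_lt] at hk
    exact hu_zero (hEmono hk (hmE x))
  have hφ_le : ∀ x, φ x ≤ m x := by
    intro x
    calc φ x ≤ ∑ k ∈ Finset.range (m x), (1:ℝ) :=
          Finset.sum_le_sum (fun k _ => hu_le_one k x)
      _ = m x := by simp
  have hφ_nonneg : ∀ x, 0 ≤ φ x :=
    fun x => Finset.sum_nonneg (fun k _ => hu_nonneg k x)
  have hφ_ge : ∀ x, (m x : ℝ) - 1 ≤ φ x := by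
    intro x
    rcases Nat.eq_zero_or_pos (m x) with h0 | hpos
    · have : φ x = 0 := by rw [hφ]; simp [h0]
      rw [this, h0]; norm_num
    · have hone : ∀ k ∈ Finset.range (m x - 1), uf k x = 1 := by
        intro k hk
        rw [Finset.mem_range] at hk
        exact hu_one (hm_not (by omega))
      have hsub : Finset.range (m x - 1) ⊆ Finset.range (m x) :=
        Finset.range_subset_range.mpr (by omega)
      have h1 : ∑ k ∈ Finset.range (m x - 1), uf k x ≤ φ x :=
        Finset.sum_le_sum_of_subset_of_nonneg hsub (fun k _ _ => hu_nonneg k x)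
      have h2 : ∑ k ∈ Finset.range (m x - 1), uf k x = ((m x - 1 : ℕ) : ℝ) := by
        rw [Finset.sum_congr rfl hone]; simp
      have h3 : ((m x - 1 : ℕ) : ℝ) = (m x : ℝ) - 1 := by
        have : (1:ℕ) ≤ m x := hpos
        push_cast [Nat.cast_sub this]
        ring
      linarith [h1, h2.symm.trans_le h1]
  have hφm : ∀ x, |φ x - m x| ≤ 1 := by
    intro x
    rw [abs_sub_le_iff]
    constructor
    · linarith [hφ_le x]
    · linarith [hφ_ge x]
  refine ⟨φ, ?_, ?_, ?_⟩
  · -- LUC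
    intro ε hε
    have hb : 0 < min c (c * ε / 3) := lt_min hc (by positivity)
    obtain ⟨U, hUo, h1U, hUδ⟩ := halpha _ hb
    refine ⟨U, hUo, h1U, ?_⟩
    intro x y hxy
    have hδ : δ x y < min c (c * ε / 3) := hUδ x y hxy
    have hδc : δ x y < c := hδ.trans_le (min_le_left _ _)
    have hδε : δ x y < c * ε / 3 := hδ.trans_le (min_le_right _ _)
    have hW' : x⁻¹ * y ∈ W := hcW x y hδc
    have hmd := hm_diff hW'
    set M := max (m x) (m y) with hM
    set m0 := min (m x) (m y) with hm0
    have hxM : m x ≤ M := le_max_left _ _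
    have hyM : m y ≤ M := le_max_right _ _
    have hMm0 : M ≤ m0 + 1 := by
      rcases le_total (m x) (m y) with h | h
      · rw [hM, hm0, max_eq_right h, min_eq_left h]; exact hmd.1
      · rw [hM, hm0, max_eq_left h, min_eq_right h]; exact hmd.2
    have hsum : φ x - φ y = ∑ k ∈ Finset.range M, (uf k x - uf k y) := by
      rw [hφeq x M hxM, hφeq y M hyM, Finset.sum_sub_distrib]
    have hzero : ∀ k ∈ Finset.range M, k ∉ Finset.Ico (m0 - 1) M →
        |uf k x - uf k y| = 0 := by
      intro k hk hk'
      rw [Finset.mem_range] at hk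
      rw [Finset.mem_Ico, not_and_or, not_le, not_lt] at hk'
      have hklt : k < m0 - 1 := by omega
      have hx1 : x ∉ E (k+1) := hm_not (by omega)
      have hy1 : y ∉ E (k+1) := hm_not (by omega)
      rw [hu_one hx1, hu_one hy1]
      simp
    have hico : Finset.Ico (m0 - 1) M ⊆ Finset.range M := by
      intro k hk
      rw [Finset.mem_Ico] at hk
      rw [Finset.mem_range]
      exact hk.2
    have key : ∑ k ∈ Finset.range M, |uf k x - uf k y| ≤ 2 * (δ x y / c) := by
      calc ∑ k ∈ Finset.range M, |uf k x - uf k y|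
          = ∑ k ∈ Finset.Ico (m0 - 1) M, |uf k x - uf k y| :=
            (Finset.sum_subset hico hzero).symm
        _ ≤ ∑ _k ∈ Finset.Ico (m0 - 1) M, (δ x y / c) :=
            Finset.sum_le_sum (fun k _ => hu_lip k x y)
        _ = ((M - (m0 - 1) : ℕ) : ℝ) * (δ x y / c) := by
            rw [Finset.sum_const, Nat.card_Ico, nsmul_eq_mul]
        _ ≤ 2 * (δ x y / c) := by
            have hcard : (M - (m0 - 1) : ℕ) ≤ 2 := by omega
            have hpos : (0:ℝ) ≤ δ x y / c := div_nonneg (hnonneg x y) hc.le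
            have : ((M - (m0 - 1) : ℕ) : ℝ) ≤ 2 := by exact_mod_cast hcard
            nlinarith
    have habs : |φ x - φ y| ≤ 2 * (δ x y / c) := by
      rw [hsum]
      exact (Finset.abs_sum_le_sum_abs _ _).trans key
    have hfin : 2 * (δ x y / c) < ε := by
      have : δ x y / c < ε / 3 := by
        rw [div_lt_iff₀ hc]
        calc δ x y < c * ε / 3 := hδε
          _ = ε / 3 * c := by ring
      linarith
    linarith [habs, hfin]
  · -- unbounded
    intro C
    obtain ⟨k, hk⟩ := exists_nat_gt (C + 1)
    obtain ⟨x, hx⟩ := (Set.ne_univ_iff_exists_notMem _).mp (hbad k)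
    have hmx : k < m x := hm_notle hx
    have h1 : (k : ℝ) ≤ (m x : ℝ) - 1 := by
      have : k + 1 ≤ m x := hmx
      have := (Nat.cast_le (α := ℝ)).mpr this
      push_cast at this
      linarith
    have h2 : C < φ x := by linarith [hφ_ge x]
    exact ⟨x, lt_of_lt_of_le h2 (le_abs_self _)⟩
  · -- bounded jump on W
    intro g w hw
    have ha := hm_step (x := g) hw
    have hb' := hm_step' (x := g) hw
    have ha' : (m (g*w) : ℝ) ≤ (m g : ℝ) + 1 := by exact_mod_cast ha
    have hb'' : (m g : ℝ) ≤ (m (g*w) : ℝ) + 1 := by exact_mod_cast hb'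
    have h1 := abs_le.mp (hφm g)
    have h2 := abs_le.mp (hφm (g*w))
    rw [abs_le]
    exact ⟨by linarith [h1.1, h1.2, h2.1, h2.2], by linarith [h1.1, h1.2, h2.1, h2.2]⟩

section pieces

variable {G : Type u} [Group G]

lemma inv_mem_pow' {W : Set G} (hsym : W⁻¹ = W) {k : ℕ} {x : G} (hx : x ∈ W ^ k) :
    x⁻¹ ∈ W ^ k := by
  induction k generalizing x with
  | zero => simp_all
  | succ n ih =>
    rw [pow_succ] at hx
    obtain ⟨a, ha, b, hb, rfl⟩ := hx
    have hb' : b⁻¹ ∈ W := by rw [← hsym]; simpa using hb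
    rw [mul_inv_rev, pow_succ']
    exact Set.mul_mem_mul hb' (ih ha)

/-- The subgroup of all products of elements of a symmetric set `W` containing `1`. -/
def powSubgroup (W : Set G) (hsym : W⁻¹ = W) : Subgroup G where
  carrier := {x | ∃ k, x ∈ W ^ k}
  one_mem' := ⟨0, by simp⟩
  mul_mem' := by
    rintro a b ⟨j, hj⟩ ⟨k, hk⟩
    exact ⟨j + k, by rw [pow_add]; exact Set.mul_mem_mul hj hk⟩
  inv_mem' := by
    rintro a ⟨j, hj⟩
    exact ⟨j, inv_mem_pow' hsym hj⟩

variable [TopologicalSpace G] [IsTopologicalGroup G]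

lemma powSubgroup_isOpen {W : Set G} (hsym : W⁻¹ = W) (hWo : IsOpen W) (h1W : (1:G) ∈ W) :
    IsOpen (powSubgroup W hsym : Set G) := by
  rw [isOpen_iff_mem_nhds]
  rintro x ⟨k, hk⟩
  rw [mem_nhds_iff]
  refine ⟨(fun w => x * w) '' W, ?_, ?_, ⟨1, h1W, mul_one x⟩⟩
  · rintro _ ⟨w, hw, rfl⟩
    exact ⟨k + 1, by rw [pow_succ]; exact Set.mul_mem_mul hk hw⟩
  · exact (Homeomorph.mulLeft x).isOpen_image.mpr hWo

lemma isOpen_subgroup_of_mem {H : Subgroup G} {W : Set G} (hWo : IsOpen W) (h1W : (1:G) ∈ W)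
    (hWH : W ⊆ (H : Set G)) : IsOpen (H : Set G) := by
  rw [isOpen_iff_mem_nhds]
  intro x hx
  rw [mem_nhds_iff]
  refine ⟨(fun w => x * w) '' W, ?_, (Homeomorph.mulLeft x).isOpen_image.mpr hWo,
    ⟨1, h1W, mul_one x⟩⟩
  rintro _ ⟨w, hw, rfl⟩
  exact H.mul_mem hx (hWH hw)

end pieces

/-- Coset function: an open subgroup of infinite index gives an unbounded LUC function. -/
lemma exists_unbounded_luc_of_infinite_index (G : Type u) [Group G] [TopologicalSpace G]
    [IsTopologicalGroup G] [TopologicalSpace.SeparableSpace G]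
    (H : Subgroup G) (hHo : IsOpen (H : Set G)) (hidx : H.index = 0) :
    ∃ φ : G → ℝ, LeftUniformlyCts φ ∧ (∀ C : ℝ, ∃ g, C < |φ g|) := by
  classical
  obtain ⟨S, hSc, hSd⟩ := TopologicalSpace.exists_countable_dense G
  have hsurj : ∀ q : G ⧸ H, ∃ s ∈ S, QuotientGroup.mk s = q := by
    intro q
    have hne : ((fun w => q.out * w) '' (H : Set G)).Nonempty :=
      ⟨q.out, 1, H.one_mem, mul_one _⟩
    have hopen : IsOpen ((fun w => q.out * w) '' (H : Set G)) :=
      (Homeomorph.mulLeft q.out).isOpen_image.mpr hHo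
    obtain ⟨s, hsS, hs⟩ := hSd.exists_mem_open hopen hne
    obtain ⟨h, hh, rfl⟩ := hs
    refine ⟨q.out * h, hsS, ?_⟩
    have : QuotientGroup.mk (s := H) (q.out * h) = QuotientGroup.mk q.out :=
      QuotientGroup.eq.mpr (by simpa [mul_assoc] using H.inv_mem hh)
    rw [this, QuotientGroup.out_eq']
  have hcnt : Countable (G ⧸ H) := by
    rw [← Set.countable_univ_iff]
    have : (Set.univ : Set (G ⧸ H)) ⊆ QuotientGroup.mk '' S := by
      intro q _
      obtain ⟨s, hsS, hs⟩ := hsurj q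
      exact ⟨s, hsS, hs⟩
    exact (hSc.image _).mono this
  have hinf : Infinite (G ⧸ H) := by
    rcases Nat.card_eq_zero.mp (by rwa [Subgroup.index_eq_card] at hidx) with h | h
    · exact absurd (h.false (QuotientGroup.mk 1)) (fun x => x)
    · exact h
  obtain ⟨e, he⟩ := (countable_iff_exists_injective (G ⧸ H)).mp hcnt
  refine ⟨fun g => (e (QuotientGroup.mk g) : ℝ), ?_, ?_⟩
  · intro ε hε
    refine ⟨(H : Set G), hHo, H.one_mem, ?_⟩
    intro x y hxy
    have h2 : QuotientGroup.mk (s := H) x = QuotientGroup.mk y := QuotientGroup.eq.mpr hxy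
    simp only [h2]
    simpa using hε
  · intro C
    obtain ⟨N, hN⟩ := exists_nat_gt C
    have hrange : (Set.range e).Infinite := Set.infinite_range_of_injective he
    obtain ⟨y, hy, hNy⟩ := hrange.exists_gt N
    obtain ⟨q, rfl⟩ := hy
    refine ⟨q.out, ?_⟩
    simp only [QuotientGroup.out_eq']
    have : (N : ℝ) < e q := by exact_mod_cast hNy
    calc C < (N : ℝ) := hN
      _ < e q := this
      _ ≤ |(e q : ℝ)| := le_abs_self _

section core

variable {G : Type u} [Group G]

/-- The subgroup of elements `z` such that right translation by `z` moves `φ` boundedly. -/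
def lucSubgroup (φ : G → ℝ) : Subgroup G where
  carrier := {z | BddAbove (Set.range fun g => |φ g - φ (g * z)|)}
  one_mem' := ⟨0, by rintro r ⟨g, rfl⟩; simp⟩
  mul_mem' := by
    rintro a b ⟨Ca, hCa⟩ ⟨Cb, hCb⟩
    refine ⟨Ca + Cb, ?_⟩
    rintro r ⟨g, rfl⟩
    have h1 : |φ g - φ (g * a)| ≤ Ca := hCa ⟨g, rfl⟩
    have h2 : |φ (g * a) - φ (g * a * b)| ≤ Cb := hCb ⟨g * a, rfl⟩
    have h3 : |φ g - φ (g * (a * b))| ≤ |φ g - φ (g * a)| + |φ (g * a) - φ (g * a * b)| := by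
      rw [← mul_assoc]
      exact abs_sub_le _ _ _
    simp only [Set.mem_setOf_eq]
    linarith
  inv_mem' := by
    rintro a ⟨Ca, hCa⟩
    refine ⟨Ca, ?_⟩
    rintro r ⟨g, rfl⟩
    have h1 : |φ (g * a⁻¹) - φ (g * a⁻¹ * a)| ≤ Ca := hCa ⟨g * a⁻¹, rfl⟩
    simp only [inv_mul_cancel_right] at h1
    simpa [abs_sub_comm] using h1

lemma mem_lucSubgroup {φ : G → ℝ} {z : G} :
    z ∈ lucSubgroup φ ↔ BddAbove (Set.range fun g => |φ g - φ (g * z)|) := Iff.rfl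

variable [TopologicalSpace G] [IsTopologicalGroup G]

lemma exists_unbounded_invariant_pseudometric (φ : G → ℝ) (hluc : LeftUniformlyCts φ)
    (hunb : ∀ C : ℝ, ∃ g, C < |φ g|) (hidx : (lucSubgroup φ).index ≠ 0) :
    ∃ D : G → G → ℝ,
      (∀ x, D x x = 0) ∧ (∀ x y, D x y = D y x) ∧ (∀ x y z, D x z ≤ D x y + D y z) ∧
      (∀ x y, 0 ≤ D x y) ∧ (∀ a x y, D (a*x) (a*y) = D x y) ∧
      (∀ ε : ℝ, 0 < ε → ∃ U : Set G, IsOpen U ∧ (1:G) ∈ U ∧ ∀ u ∈ U, D 1 u ≤ ε) ∧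
      (∀ R : ℝ, ∃ u : G, R < D 1 u) := by
  classical
  set K := lucSubgroup φ with hK
  set c : G → ℝ := fun z => sSup (Set.range fun g => |φ g - φ (g * z)|) with hc
  -- basic facts about c
  have hc_nonneg : ∀ z, 0 ≤ c z := by
    intro z
    exact Real.sSup_nonneg (by rintro r ⟨g, rfl⟩; exact abs_nonneg _)
  have hc_le : ∀ {z b}, 0 ≤ b → (∀ g : G, |φ g - φ (g * z)| ≤ b) → c z ≤ b := by
    intro z b hb h
    exact Real.sSup_le (by rintro r ⟨g, rfl⟩; exact h g) hb
  have hc_ge : ∀ {z}, z ∈ K → ∀ g : G, |φ g - φ (g * z)| ≤ c z := by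
    intro z hz g
    exact le_csSup hz ⟨g, rfl⟩
  have hc_one : c 1 = 0 := by
    rw [hc]
    simp
  have hc_add : ∀ {a b}, a ∈ K → b ∈ K → c (a * b) ≤ c a + c b := by
    intro a b ha hb
    refine hc_le (add_nonneg (hc_nonneg a) (hc_nonneg b)) ?_
    intro g
    have h1 := hc_ge ha g
    have h2 := hc_ge hb (g * a)
    have h3 : |φ g - φ (g * (a * b))| ≤ |φ g - φ (g * a)| + |φ (g * a) - φ (g * a * b)| := by
      rw [← mul_assoc]; exact abs_sub_le _ _ _
    rw [← mul_assoc] at h3 ⊢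
    linarith
  have hc_inv : ∀ {a : G}, c a⁻¹ = c a := by
    intro a
    have : (Set.range fun g => |φ g - φ (g * a⁻¹)|) = Set.range fun g => |φ g - φ (g * a)| := by
      ext r
      constructor
      · rintro ⟨g, rfl⟩
        exact ⟨g * a⁻¹, by simp [abs_sub_comm]⟩
      · rintro ⟨g, rfl⟩
        exact ⟨g * a, by simp [abs_sub_comm]⟩
    simp only [hc, this]
  have hc_small : ∀ ε : ℝ, 0 < ε → ∃ V : Set G, IsOpen V ∧ (1:G) ∈ V ∧ (V ⊆ (K : Set G)) ∧
      ∀ v ∈ V, c v ≤ ε := by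
    intro ε hε
    obtain ⟨V, hVo, h1V, hV⟩ := hluc ε hε
    obtain ⟨V₁, hV₁o, h1V₁, hV₁⟩ := hluc 1 one_pos
    refine ⟨V ∩ V₁, hVo.inter hV₁o, ⟨h1V, h1V₁⟩, ?_, ?_⟩
    · intro v hv
      refine ⟨1, ?_⟩
      rintro r ⟨g, rfl⟩
      exact (hV₁ g (g * v) (by rw [inv_mul_cancel_left]; exact hv.2)).le
    · intro v hv
      exact hc_le hε.le (fun g => (hV g (g * v) (by rw [inv_mul_cancel_left]; exact hv.1)).le)
  -- finite quotient setup
  have hfin : Finite (G ⧸ K) := by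
    rcases Nat.card_ne_zero.mp (by rwa [Subgroup.index_eq_card] at hidx) with ⟨_, h⟩
    exact h
  letI : Fintype (G ⧸ K) := Fintype.ofFinite _
  haveI hne : Nonempty (G ⧸ K) := ⟨QuotientGroup.mk 1⟩
  -- the K-part of an element
  set kp : G → G := fun w => (QuotientGroup.mk (s := K) w).out⁻¹ * w with hkp
  have hkp_mem : ∀ w, kp w ∈ K := by
    intro w
    exact QuotientGroup.eq.mp (QuotientGroup.out_eq' (QuotientGroup.mk (s := K) w))
  have hmk_mul : ∀ (w : G) {κ : G}, κ ∈ K →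
      QuotientGroup.mk (s := K) (w * κ) = QuotientGroup.mk w := by
    intro w κ hκ
    symm
    refine QuotientGroup.eq.mpr ?_
    simpa [mul_assoc] using hκ
  have hkp_mul : ∀ (w : G) {κ : G}, κ ∈ K → kp (w * κ) = kp w * κ := by
    intro w κ hκ
    rw [hkp]
    simp only []
    rw [hmk_mul w hκ, mul_assoc]
  -- the pseudometric
  set gq : (G ⧸ K) → G → G := fun q x => kp (x⁻¹ * q.out) with hgq
  have hgq_mem : ∀ q x, gq q x ∈ K := fun q x => hkp_mem _
  set D : G → G → ℝ := fun x y => Finset.univ.sup' Finset.univ_nonempty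
    (fun q : G ⧸ K => c (gq q x * (gq q y)⁻¹)) with hD
  have hterm_mem : ∀ (q : G ⧸ K) (x y : G), gq q x * (gq q y)⁻¹ ∈ K :=
    fun q x y => K.mul_mem (hgq_mem q x) (K.inv_mem (hgq_mem q y))
  have hD_le : ∀ {x y : G} {b : ℝ}, (∀ q : G ⧸ K, c (gq q x * (gq q y)⁻¹) ≤ b) → D x y ≤ b := by
    intro x y b h
    exact Finset.sup'_le _ _ (fun q _ => h q)
  have hD_ge : ∀ (q : G ⧸ K) (x y : G), c (gq q x * (gq q y)⁻¹) ≤ D x y :=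
    fun q x y =>
      Finset.le_sup' (fun q : G ⧸ K => c (gq q x * (gq q y)⁻¹)) (Finset.mem_univ q)
  have hD_self : ∀ x, D x x = 0 := by
    intro x
    rw [hD]
    simp only [mul_inv_cancel]
    rw [Finset.sup'_const]
    exact hc_one
  have hD_nonneg : ∀ x y, 0 ≤ D x y :=
    fun x y => le_trans (hc_nonneg _) (hD_ge (QuotientGroup.mk 1) x y)
  have hD_symm : ∀ x y, D x y = D y x := by
    intro x y
    have hfe : (fun q : G ⧸ K => c (gq q x * (gq q y)⁻¹))
        = (fun q : G ⧸ K => c (gq q y * (gq q x)⁻¹)) := by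
      funext q
      rw [← hc_inv (a := gq q y * (gq q x)⁻¹)]
      congr 1
      group
    show Finset.univ.sup' Finset.univ_nonempty (fun q : G ⧸ K => c (gq q x * (gq q y)⁻¹))
        = Finset.univ.sup' Finset.univ_nonempty (fun q : G ⧸ K => c (gq q y * (gq q x)⁻¹))
    rw [hfe]
  have hD_tri : ∀ x y z, D x z ≤ D x y + D y z := by
    intro x y z
    refine hD_le ?_
    intro q
    have h1 : gq q x * (gq q z)⁻¹ = (gq q x * (gq q y)⁻¹) * (gq q y * (gq q z)⁻¹) := by group
    rw [h1]
    exact (hc_add (hterm_mem q x y) (hterm_mem q y z)).trans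
      (add_le_add (hD_ge q x y) (hD_ge q y z))
  have hD_linv_le : ∀ a x y, D (a*x) (a*y) ≤ D x y := by
    intro a x y
    refine hD_le ?_
    intro q
    set q' : G ⧸ K := QuotientGroup.mk (a⁻¹ * q.out) with hq'
    set κ : G := (a⁻¹ * q.out)⁻¹ * q'.out with hκdef
    have hκK : κ ∈ K := by
      rw [hκdef]
      exact QuotientGroup.eq.mp (QuotientGroup.out_eq' q').symm
    have hout : q'.out = (a⁻¹ * q.out) * κ := by rw [hκdef]; group
    have hx : gq q' x = gq q (a*x) * κ := by
      rw [hgq]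
      simp only []
      rw [hout, ← mul_assoc, hkp_mul _ hκK]
      congr 2
      group
    have hy : gq q' y = gq q (a*y) * κ := by
      rw [hgq]
      simp only []
      rw [hout, ← mul_assoc, hkp_mul _ hκK]
      congr 2
      group
    have harg : gq q (a*x) * (gq q (a*y))⁻¹ = gq q' x * (gq q' y)⁻¹ := by
      rw [hx, hy]; group
    rw [harg]
    exact hD_ge q' x y
  have hD_linv : ∀ a x y, D (a*x) (a*y) = D x y := by
    intro a x y
    refine le_antisymm (hD_linv_le a x y) ?_
    have := hD_linv_le a⁻¹ (a*x) (a*y)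
    simpa [← mul_assoc] using this
  -- continuity at 1
  have hD_cont : ∀ ε : ℝ, 0 < ε → ∃ U : Set G, IsOpen U ∧ (1:G) ∈ U ∧ ∀ u ∈ U, D 1 u ≤ ε := by
    intro ε hε
    obtain ⟨S, hSo, h1S, hSK, hSc⟩ := hc_small ε hε
    set U : Set G := ⋂ q : G ⧸ K, (fun u => q.out⁻¹ * u * q.out) ⁻¹' S with hU
    have hcont : ∀ q : G ⧸ K, Continuous (fun u : G => q.out⁻¹ * u * q.out) := by
      intro q
      exact (continuous_mul_right q.out).comp (continuous_mul_left q.out⁻¹)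
    refine ⟨U, isOpen_iInter_of_finite (fun q => (hSo.preimage (hcont q))), ?_, ?_⟩
    · rw [hU]
      simp only [Set.mem_iInter, Set.mem_preimage]
      intro q
      simpa using h1S
    · intro u hu
      rw [hU, Set.mem_iInter] at hu
      refine hD_le ?_
      intro q
      have htq : q.out⁻¹ * u * q.out ∈ S := hu q
      have hgq1 : gq q 1 = 1 := by
        rw [hgq]
        simp only [inv_one, one_mul]
        rw [hkp]
        simp only [QuotientGroup.out_eq']
        group
      have hmku : QuotientGroup.mk (s := K) (u⁻¹ * q.out) = q := by
        have : u⁻¹ * q.out = q.out * (q.out⁻¹ * u * q.out)⁻¹ := by group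
        rw [this, hmk_mul _ (K.inv_mem (hSK htq)), QuotientGroup.out_eq']
      have hgqu : gq q u = (q.out⁻¹ * u * q.out)⁻¹ := by
        rw [hgq]
        simp only []
        rw [hkp]
        simp only [hmku]
        group
      rw [hgq1, hgqu, one_mul, inv_inv]
      exact hSc _ htq
  -- unboundedness
  have hKc_unb : ∀ R : ℝ, ∃ z ∈ K, R < c z := by
    intro R
    by_contra hcon
    push_neg at hcon
    set B : ℝ := Finset.univ.sup' Finset.univ_nonempty
      (fun q : G ⧸ K => |φ (q.out)|) with hB
    obtain ⟨g, hg⟩ := hunb (B + max R 0)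
    have h1 : |φ ((QuotientGroup.mk (s := K) g).out)| ≤ B :=
      Finset.le_sup' (fun q : G ⧸ K => |φ (q.out)|) (Finset.mem_univ _)
    have h2 : |φ ((QuotientGroup.mk (s := K) g).out) - φ ((QuotientGroup.mk (s := K) g).out * kp g)|
        ≤ c (kp g) := hc_ge (hkp_mem g) _
    have h3 : (QuotientGroup.mk (s := K) g).out * kp g = g := by rw [hkp]; group
    rw [h3] at h2
    have h4 : c (kp g) ≤ max R 0 := le_trans (hcon _ (hkp_mem g)) (le_max_left _ _)
    have h2' : |φ g - φ ((QuotientGroup.mk (s := K) g).out)| ≤ c (kp g) := by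
      rw [abs_sub_comm]; exact h2
    have h6 := abs_sub_abs_le_abs_sub (φ g) (φ ((QuotientGroup.mk (s := K) g).out))
    linarith
  have hD_unb : ∀ R : ℝ, ∃ u : G, R < D 1 u := by
    intro R
    obtain ⟨z, hzK, hz⟩ := hKc_unb R
    set e₀ : G := (QuotientGroup.mk (s := K) (1:G)).out with he₀
    have he₀K : e₀ ∈ K := by
      have := QuotientGroup.eq.mp (QuotientGroup.out_eq' (QuotientGroup.mk (s := K) (1:G)))
      simpa using this
    set u : G := e₀ * z * e₀⁻¹ with hu
    have hq1 : gq (QuotientGroup.mk (s := K) (1:G)) 1 = 1 := by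
      rw [hgq]
      simp only [inv_one, one_mul, hkp, QuotientGroup.out_eq']
      group
    have hmku : QuotientGroup.mk (s := K) (u⁻¹ * e₀) = QuotientGroup.mk (s := K) (1:G) := by
      have h1 : u⁻¹ * e₀ = e₀ * z⁻¹ := by rw [hu]; group
      have h2 : e₀ * z⁻¹ = 1 * (e₀ * z⁻¹) := by group
      rw [h1, h2, hmk_mul _ (K.mul_mem he₀K (K.inv_mem hzK))]
    have hgqu : gq (QuotientGroup.mk (s := K) (1:G)) u = z⁻¹ := by
      rw [hgq]
      simp only [hkp, hmku]
      rw [← he₀]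
      rw [show u⁻¹ * e₀ = e₀ * z⁻¹ by rw [hu]; group]
      rw [show ((e₀ * z⁻¹ : G) : G ⧸ K) = ((1:G) : G ⧸ K) by rw [← show u⁻¹ * e₀ = e₀ * z⁻¹ by rw [hu]; group]; exact hmku, ← he₀]
      group
    refine ⟨u, lt_of_lt_of_le hz ?_⟩
    have := hD_ge (QuotientGroup.mk (s := K) (1:G)) 1 u
    rw [hq1, hgqu, one_mul, inv_inv] at this
    exact this
  exact ⟨D, hD_self, hD_symm, hD_tri, hD_nonneg, hD_linv, hD_cont, hD_unb⟩

lemma not_hasPropertyOB_of_pseudometric (D : G → G → ℝ)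
    (hself : ∀ x, D x x = 0) (hsymm : ∀ x y, D x y = D y x)
    (htri : ∀ x y z, D x z ≤ D x y + D y z) (hnn : ∀ x y, 0 ≤ D x y)
    (hinv : ∀ a x y, D (a*x) (a*y) = D x y)
    (hcont : ∀ ε : ℝ, 0 < ε → ∃ U : Set G, IsOpen U ∧ (1:G) ∈ U ∧ ∀ u ∈ U, D 1 u ≤ ε)
    (hunb : ∀ R : ℝ, ∃ u : G, R < D 1 u) :
    ¬ HasPropertyOB G := by
  classical
  have hDd : ∀ x u v : G, |D x u - D x v| ≤ D u v := by
    intro x u v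
    rw [abs_le]
    constructor
    · linarith [htri x u v]
    · linarith [htri x v u, hsymm v u]
  have hD1x : ∀ x u : G, |D x u - D 1 u| ≤ D 1 x := by
    intro x u
    rw [abs_le]
    constructor
    · linarith [htri (1:G) x u]
    · linarith [htri x (1:G) u, hsymm x 1]
  have hshift : ∀ g x u : G, D x (g⁻¹ * u) = D (g * x) u := by
    intro g x u
    have := hinv g x (g⁻¹ * u)
    rw [mul_inv_cancel_left] at this
    exact this.symm
  have hcont' : ∀ x : G, Continuous (fun u => D x u) := by
    intro x
    rw [continuous_iff_continuousAt]
    intro u₀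
    rw [ContinuousAt, Metric.tendsto_nhds]
    intro ε hε
    obtain ⟨U, hUo, h1U, hU⟩ := hcont (ε/2) (half_pos hε)
    have hmem : (fun u => u₀⁻¹ * u) ⁻¹' U ∈ 𝓝 u₀ :=
      (hUo.preimage (continuous_mul_left u₀⁻¹)).mem_nhds (by simp [h1U])
    refine Filter.eventually_of_mem hmem ?_
    intro u hu
    rw [Real.dist_eq]
    have h1 : D u₀ u = D 1 (u₀⁻¹ * u) := by
      have := hinv u₀⁻¹ u₀ u
      simpa using this.symm
    have h2 : D u₀ u ≤ ε/2 := h1 ▸ hU _ hu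
    have h3 := hDd x u u₀
    rw [hsymm u u₀] at h3
    calc |D x u - D x u₀| ≤ D u₀ u := h3
      _ ≤ ε/2 := h2
      _ < ε := by linarith
  -- the Kuratowski-type embedding
  set Θ : G → BoundedContinuousFunction G ℝ := fun x =>
    ⟨⟨fun u => D x u - D 1 u, (hcont' x).sub (hcont' 1)⟩, 2 * D 1 x, by
      intro u v
      rw [Real.dist_eq]
      have h1 := hD1x x u
      have h2 := hD1x x v
      have habs : |(D x u - D 1 u) - (D x v - D 1 v)|
          ≤ |D x u - D 1 u| + |D x v - D 1 v| := by
        calc |(D x u - D 1 u) - (D x v - D 1 v)|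
            ≤ |D x u - D 1 u| + |-(D x v - D 1 v)| := by
              rw [sub_eq_add_neg]; exact abs_add_le _ _
          _ = |D x u - D 1 u| + |D x v - D 1 v| := by rw [abs_neg]
      linarith⟩ with hΘ
  have hΘapp : ∀ x u, Θ x u = D x u - D 1 u := fun x u => rfl
  set T : G → BoundedContinuousFunction G ℝ → BoundedContinuousFunction G ℝ := fun g F =>
    F.compContinuous ⟨fun u => g⁻¹ * u, continuous_mul_left g⁻¹⟩ + Θ g with hT
  have hTapp : ∀ g F u, (T g F) u = F (g⁻¹ * u) + Θ g u := fun g F u => rfl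
  have hTΘ : ∀ g x, T g (Θ x) = Θ (g * x) := by
    intro g x
    ext u
    rw [hTapp, hΘapp, hΘapp, hΘapp, hshift g x u, hshift g 1 u, mul_one]
    ring
  have hT1 : ∀ F, T 1 F = F := by
    intro F
    ext u
    rw [hTapp, hΘapp]
    simp [hself]
  have hTmul : ∀ g h F, T (g * h) F = T g (T h F) := by
    intro g h F
    ext u
    rw [hTapp, hTapp, hTapp, hΘapp, hΘapp, hΘapp]
    rw [mul_inv_rev, mul_assoc]
    rw [hshift g h u, hshift g 1 u, mul_one]
    ring
  have hTdist_le : ∀ g F F', dist (T g F) (T g F') ≤ dist F F' := by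
    intro g F F'
    rw [BoundedContinuousFunction.dist_le dist_nonneg]
    intro u
    rw [hTapp, hTapp]
    rw [show ∀ a b c : ℝ, dist (a + c) (b + c) = dist a b from fun a b c => dist_add_right a b c]
    exact BoundedContinuousFunction.dist_coe_le_dist _
  have hTdist : ∀ g F F', dist (T g F) (T g F') = dist F F' := by
    intro g F F'
    refine le_antisymm (hTdist_le g F F') ?_
    have h1 := hTdist_le g⁻¹ (T g F) (T g F')
    rw [← hTmul, ← hTmul, inv_mul_cancel, hT1, hT1] at h1
    exact h1
  set X : Set (BoundedContinuousFunction G ℝ) := closure (Set.range Θ) with hX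
  have hmapsto : ∀ g, Set.MapsTo (T g) (Set.range Θ) (Set.range Θ) := by
    rintro g _ ⟨x, rfl⟩
    exact ⟨g * x, (hTΘ g x).symm⟩
  have hTcont : ∀ g, Continuous (T g) := by
    intro g
    refine LipschitzWith.continuous (K := 1) ?_
    refine LipschitzWith.of_dist_le_mul ?_
    intro F F'
    rw [hTdist]
    simp
  have hXmem : ∀ g F, F ∈ X → T g F ∈ X :=
    fun g F hF => map_mem_closure (hTcont g) hF (hmapsto g)
  set ρ : G → X → X := fun g F => ⟨T g F.1, hXmem g F.1 F.2⟩ with hρ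
  have hρ1 : ∀ x : X, ρ 1 x = x := fun x => Subtype.ext (hT1 x.1)
  have hρmul : ∀ g h (x : X), ρ (g * h) x = ρ g (ρ h x) :=
    fun g h x => Subtype.ext (hTmul g h x.1)
  have hρiso : ∀ g, Isometry (ρ g) := by
    intro g
    refine Isometry.of_dist_eq ?_
    intro a b
    rw [Subtype.dist_eq, Subtype.dist_eq]
    exact hTdist g a.1 b.1
  have hΘdist_le : ∀ a b : G, dist (Θ a) (Θ b) ≤ D a b := by
    intro a b
    rw [BoundedContinuousFunction.dist_le (hnn a b)]
    intro u
    rw [hΘapp, hΘapp, Real.dist_eq]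
    have : (D a u - D 1 u) - (D b u - D 1 u) = D a u - D b u := by ring
    rw [this]
    have h := hDd u a b
    rw [hsymm u a, hsymm u b] at h
    exact h
  have hρcont : Continuous (fun p : G × X => ρ p.1 p.2) := by
    rw [continuous_iff_continuousAt]
    rintro ⟨g₀, x₀⟩
    rw [ContinuousAt, Metric.tendsto_nhds]
    intro ε hε
    -- approximate x₀ by an orbit point
    have hx₀ : (x₀ : BoundedContinuousFunction G ℝ) ∈ closure (Set.range Θ) := x₀.2
    obtain ⟨Fbar, ⟨xb, rfl⟩, hFbar⟩ := Metric.mem_closure_iff.mp hx₀ (ε/8) (by linarith)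
    obtain ⟨U, hUo, h1U, hU⟩ := hcont (ε/8) (by linarith)
    have hO : IsOpen ((fun g => xb⁻¹ * (g₀⁻¹ * g) * xb) ⁻¹' U) := by
      refine hUo.preimage ?_
      exact (continuous_mul_right xb).comp
        ((continuous_mul_left xb⁻¹).comp (continuous_mul_left g₀⁻¹))
    have hg₀O : g₀ ∈ ((fun g => xb⁻¹ * (g₀⁻¹ * g) * xb) ⁻¹' U) := by
      simp only [Set.mem_preimage, inv_mul_cancel]
      simpa using h1U
    have hmemnhds : ((fun g => xb⁻¹ * (g₀⁻¹ * g) * xb) ⁻¹' U) ×ˢ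
        (Metric.ball x₀ (ε/8)) ∈ 𝓝 (g₀, x₀) := by
      rw [nhds_prod_eq]
      exact Filter.prod_mem_prod (hO.mem_nhds hg₀O) (Metric.ball_mem_nhds x₀ (by linarith))
    refine Filter.eventually_of_mem hmemnhds ?_
    rintro ⟨g, x⟩ ⟨hg, hx⟩
    simp only [Set.mem_preimage] at hg
    rw [Metric.mem_ball] at hx
    -- estimate
    have e1 : dist (ρ g x) (ρ g₀ x₀) ≤ dist (ρ g x) (ρ g x₀) + dist (ρ g x₀) (ρ g₀ x₀) :=
      dist_triangle _ _ _
    have e2 : dist (ρ g x) (ρ g x₀) = dist x x₀ := (hρiso g).dist_eq x x₀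
    have e3 : dist (ρ g x₀) (ρ g₀ x₀) = dist (T (g₀⁻¹ * g) x₀.1) (x₀.1) := by
      rw [Subtype.dist_eq]
      show dist (T g x₀.1) (T g₀ x₀.1) = _
      have h9 : T g x₀.1 = T g₀ (T (g₀⁻¹ * g) x₀.1) := by
        rw [← hTmul, mul_inv_cancel_left]
      rw [h9, hTdist g₀]
    set hel := g₀⁻¹ * g with hhel
    have e4 : dist (T hel x₀.1) x₀.1 ≤ dist (T hel x₀.1) (T hel (Θ xb)) + dist (T hel (Θ xb)) (Θ xb)
        + dist (Θ xb) x₀.1 := by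
      have := dist_triangle4 (T hel x₀.1) (T hel (Θ xb)) (Θ xb) x₀.1
      linarith
    have e5 : dist (T hel x₀.1) (T hel (Θ xb)) = dist x₀.1 (Θ xb) := hTdist hel _ _
    have e6 : dist (T hel (Θ xb)) (Θ xb) ≤ ε/8 := by
      rw [hTΘ]
      refine (hΘdist_le _ _).trans ?_
      have h3 := hinv xb⁻¹ (hel * xb) xb
      rw [inv_mul_cancel] at h3
      have h4 : D (hel * xb) xb = D 1 (xb⁻¹ * hel * xb) := by
        rw [← h3, hsymm, ← mul_assoc]
      rw [h4]
      exact hU _ hg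
    have e7 : dist (Θ xb) x₀.1 < ε/8 := by
      rw [dist_comm]
      exact hFbar
    have e8 : dist x₀.1 (Θ xb) < ε/8 := hFbar
    calc dist (ρ g x) (ρ g₀ x₀) ≤ dist (ρ g x) (ρ g x₀) + dist (ρ g x₀) (ρ g₀ x₀) := e1
      _ = dist x x₀ + dist (T hel x₀.1) (x₀.1) := by rw [e2, e3]
      _ ≤ dist x x₀ + (dist (T hel x₀.1) (T hel (Θ xb)) + dist (T hel (Θ xb)) (Θ xb)
          + dist (Θ xb) x₀.1) := by linarith [e4]
      _ < ε := by
          rw [e5]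
          linarith
  -- conclusion: the orbit of Θ 1 is unbounded
  intro hOB
  set pt : X := ⟨Θ 1, subset_closure ⟨1, rfl⟩⟩ with hpt
  have hb := hOB X ρ hρ1 hρmul hρiso hρcont pt
  rw [Metric.isBounded_iff] at hb
  obtain ⟨C, hC⟩ := hb
  obtain ⟨u, hu⟩ := hunb C
  have h1 : dist (ρ u pt) (ρ 1 pt) ≤ C :=
    hC (Set.mem_range_self u) (Set.mem_range_self 1)
  have h2 : dist (ρ u pt) (ρ 1 pt) = dist (Θ u) (Θ 1) := by
    rw [Subtype.dist_eq]
    have hvu : T u (Θ 1) = Θ u := by rw [hTΘ, mul_one]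
    have hv1 : T 1 (Θ 1) = Θ 1 := hT1 _
    simp only [hρ]
    rw [hvu, hv1]
  have h3 : D 1 u ≤ dist (Θ u) (Θ 1) := by
    have h5 : |D u 1 - D 1 1 - (D 1 1 - D 1 1)| = D u 1 := by
      rw [hself]
      rw [sub_zero, sub_self, sub_zero]
      exact abs_of_nonneg (hnn u 1)
    rw [hsymm 1 u]
    calc D u 1 = |D u 1 - D 1 1 - (D 1 1 - D 1 1)| := h5.symm
      _ ≤ dist (Θ u) (Θ 1) := by
          have h6 := BoundedContinuousFunction.dist_coe_le_dist (f := Θ u) (g := Θ 1) 1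
          rw [hΘapp, hΘapp, Real.dist_eq] at h6
          convert h6 using 2
  linarith


end core

section easy

variable {G : Type u} [Group G] [TopologicalSpace G] [IsTopologicalGroup G]

lemma coe_pow_subgroup (H : Subgroup G) : ∀ j : ℕ, 1 ≤ j → (H : Set G) ^ j = (H : Set G) := by
  intro j hj
  induction j with
  | zero => omega
  | succ n ih =>
    rcases Nat.eq_zero_or_pos n with h0 | hpos
    · subst h0; simp
    · rw [pow_succ, ih hpos]
      apply Set.Subset.antisymm
      · rintro _ ⟨a, ha, b, hb, rfl⟩
        exact H.mul_mem ha hb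
      · intro a ha
        exact ⟨a, ha, 1, H.one_mem, mul_one a⟩

lemma bounded_imp_luc_bounded (hB : BoundedTopGroup G) :
    ∀ φ : G → ℝ, LeftUniformlyCts φ → ∃ C : ℝ, ∀ g : G, |φ g| ≤ C := by
  intro φ hφ
  obtain ⟨V, hVo, h1V, hV⟩ := hφ 1 one_pos
  obtain ⟨F, hF, k, hk1, hFV⟩ := hB V hVo h1V
  obtain ⟨B0, hB0⟩ := (hF.image (fun f => |φ f|)).bddAbove
  have hcl : ∀ (j : ℕ) (w : G), w ∈ V ^ j → ∀ a : G, |φ a - φ (a * w)| ≤ j := by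
    intro j
    induction j with
    | zero =>
      intro w hw a
      simp only [pow_zero, Set.mem_one] at hw
      simp [hw]
    | succ n ih =>
      intro w hw a
      rw [pow_succ] at hw
      obtain ⟨z, hz, v, hv, rfl⟩ := hw
      have h1 := ih z hz a
      have h2 : |φ (a*z) - φ (a*z*v)| < 1 := by
        refine hV (a*z) (a*z*v) ?_
        simp [mul_assoc, hv]
      have h3 : |φ a - φ (a*(z*v))| ≤ |φ a - φ (a*z)| + |φ (a*z) - φ (a*z*v)| := by
        rw [← mul_assoc]
        exact abs_sub_le _ _ _
      push_cast
      linarith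
  refine ⟨B0 + k, ?_⟩
  intro g
  have hg : g ∈ F * V ^ k := by rw [hFV]; exact Set.mem_univ g
  obtain ⟨f, hf, w, hw, rfl⟩ := hg
  have h1 : |φ f| ≤ B0 := hB0 (Set.mem_image_of_mem _ hf)
  have h2 : |φ f - φ (f*w)| ≤ k := hcl k w hw f
  have h3 := abs_sub_abs_le_abs_sub (φ (f*w)) (φ f)
  rw [abs_sub_comm] at h3
  linarith

lemma bounded_imp_OB (hB : BoundedTopGroup G) : HasPropertyOB G := by
  intro X _ ρ h1 hmul hiso hcont x
  have hcx : Continuous (fun g : G => ρ g x) :=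
    hcont.comp (continuous_id.prodMk continuous_const)
  set V : Set G := (fun g => ρ g x) ⁻¹' (Metric.ball x 1) with hVdef
  have hVo : IsOpen V := Metric.isOpen_ball.preimage hcx
  have h1V : (1:G) ∈ V := by
    simp only [hVdef, Set.mem_preimage, Metric.mem_ball, h1]
    simp
  obtain ⟨F, hF, k, hk1, hFV⟩ := hB V hVo h1V
  obtain ⟨B0, hB0⟩ := (hF.image (fun f => dist (ρ f x) x)).bddAbove
  have hcl : ∀ (j : ℕ) (w : G), w ∈ V ^ j → dist (ρ w x) x ≤ j := by
    intro j
    induction j with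
    | zero =>
      intro w hw
      simp only [pow_zero, Set.mem_one] at hw
      simp [hw, h1]
    | succ n ih =>
      intro w hw
      rw [pow_succ] at hw
      obtain ⟨z, hz, v, hv, rfl⟩ := hw
      have h2 : dist (ρ v x) x < 1 := hv
      have h3 : ρ (z * v) x = ρ z (ρ v x) := hmul z v x
      have h4 : dist (ρ z (ρ v x)) x ≤ dist (ρ z (ρ v x)) (ρ z x) + dist (ρ z x) x :=
        dist_triangle _ _ _
      rw [(hiso z).dist_eq] at h4
      have h5 := ih z hz
      rw [h3]
      push_cast
      linarith
  refine (Metric.isBounded_closedBall (x := x) (r := B0 + k)).subset ?_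
  rintro _ ⟨g, rfl⟩
  have hg : g ∈ F * V ^ k := by rw [hFV]; exact Set.mem_univ g
  obtain ⟨f, hf, w, hw, rfl⟩ := hg
  have h1' : dist (ρ f x) x ≤ B0 := hB0 (Set.mem_image_of_mem _ hf)
  have h2 := hcl k w hw
  rw [Metric.mem_closedBall]
  show dist (ρ (f * w) x) x ≤ B0 + (k:ℝ)
  rw [hmul f w x]
  have h4 : dist (ρ f (ρ w x)) x ≤ dist (ρ f (ρ w x)) (ρ f x) + dist (ρ f x) x :=
    dist_triangle _ _ _
  rw [(hiso f).dist_eq] at h4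
  linarith

lemma bounded_imp_index (hB : BoundedTopGroup G) :
    ∀ H : Subgroup G, IsOpen (H : Set G) → H.index ≠ 0 := by
  intro H hHo
  obtain ⟨F, hF, k, hk1, hFV⟩ := hB (H : Set G) hHo H.one_mem
  rw [coe_pow_subgroup H k hk1] at hFV
  have hfin : Finite (G ⧸ H) := by
    rw [← Set.finite_univ_iff]
    refine (hF.image (QuotientGroup.mk (s := H))).subset ?_
    intro q _
    have hq : q.out ∈ F * (H : Set G) := by rw [hFV]; exact Set.mem_univ _
    obtain ⟨f, hf, w, hw, heq⟩ := hq
    have heq' : f * w = q.out := heq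
    refine ⟨f, hf, ?_⟩
    have h2 : QuotientGroup.mk (s := H) f = QuotientGroup.mk (f * w) :=
      QuotientGroup.eq.mpr (by rw [inv_mul_cancel_left]; exact hw)
    calc QuotientGroup.mk (s := H) f = QuotientGroup.mk (f * w) := h2
      _ = QuotientGroup.mk q.out := by rw [heq']
      _ = q := QuotientGroup.out_eq' q
  exact Subgroup.index_ne_zero_of_finite

end easy

section crux

variable {G : Type u} [Group G] [TopologicalSpace G] [IsTopologicalGroup G] [PolishSpace G]

lemma crux (hnb : ¬ BoundedTopGroup G) :
    (∃ φ : G → ℝ, LeftUniformlyCts φ ∧ ∀ C : ℝ, ∃ g, C < |φ g|) ∧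
    (¬ HasPropertyOB G ∨ ∃ H : Subgroup G, IsOpen (H : Set G) ∧ H.index = 0) := by
  classical
  rw [BoundedTopGroup] at hnb
  push_neg at hnb
  obtain ⟨V, hVo, h1V, hbadV⟩ := hnb
  set W : Set G := V ∩ V⁻¹ with hWdef
  have hWo : IsOpen W := hVo.inter hVo.inv
  have h1W : (1:G) ∈ W := ⟨h1V, by simpa using h1V⟩
  have hsym : W⁻¹ = W := by
    rw [hWdef, Set.inter_inv, inv_inv, Set.inter_comm]
  have hWV : W ⊆ V := Set.inter_subset_left
  have hbadW : ∀ F : Set G, F.Finite → ∀ k : ℕ, F * W ^ k ≠ Set.univ := by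
    intro F hFfin k hFW
    have hk1 : F * W ^ (k+1) = Set.univ := by
      refine Set.eq_univ_of_univ_subset ?_
      rw [← hFW]
      exact Set.mul_subset_mul_left (Set.pow_subset_pow_right h1W (Nat.le_succ k))
    have : F * V ^ (k+1) = Set.univ := by
      refine Set.eq_univ_of_univ_subset ?_
      rw [← hk1]
      exact Set.mul_subset_mul_left (Set.pow_subset_pow_left hWV)
    exact hbadV F hFfin (k+1) (Nat.succ_le_succ (Nat.zero_le k)) this
  set H : Subgroup G := powSubgroup W hsym with hHdef
  have hHo : IsOpen (H : Set G) := powSubgroup_isOpen hsym hWo h1W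
  rcases eq_or_ne H.index 0 with hidx | hidx
  · obtain ⟨φ, hluc, hunb⟩ := exists_unbounded_luc_of_infinite_index G H hHo hidx
    exact ⟨⟨φ, hluc, hunb⟩, Or.inr ⟨H, hHo, hidx⟩⟩
  · have hfin : Finite (G ⧸ H) := by
      rcases Nat.card_ne_zero.mp (by rwa [Subgroup.index_eq_card] at hidx) with ⟨_, h⟩
      exact h
    set F₀ : Set G := Set.range (fun q : G ⧸ H => q.out) with hF₀def
    have hF₀fin : F₀.Finite := Set.finite_range _
    have hcov : ∀ x : G, ∃ k, x ∈ F₀ * W ^ k := by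
      intro x
      have hmem : (QuotientGroup.mk (s := H) x).out⁻¹ * x ∈ H :=
        QuotientGroup.eq.mp (QuotientGroup.out_eq' _)
      obtain ⟨k, hk⟩ := hmem
      refine ⟨k, (QuotientGroup.mk (s := H) x).out, ⟨_, rfl⟩, _, hk, ?_⟩
      group
    have hbad' : ∀ k, F₀ * W ^ k ≠ Set.univ := fun k => hbadW F₀ hF₀fin k
    obtain ⟨φ, hluc, hunb, hjump⟩ :=
      exists_unbounded_luc_of_findex G W hWo h1W hsym F₀ hcov hbad'
    refine ⟨⟨φ, hluc, hunb⟩, Or.inl ?_⟩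
    have hle : H ≤ lucSubgroup φ := by
      intro y hy
      obtain ⟨k, hk⟩ := hy
      have hcl : ∀ (j : ℕ) (z : G), z ∈ W ^ j → ∀ g : G, |φ g - φ (g * z)| ≤ 3 * j := by
        intro j
        induction j with
        | zero =>
          intro z hz g
          simp only [pow_zero, Set.mem_one] at hz
          simp [hz]
        | succ n ih =>
          intro z hz g
          rw [pow_succ] at hz
          obtain ⟨a, ha, b, hb, rfl⟩ := hz
          have h1 := ih a ha g
          have h2 := hjump (g * a) b hb
          have h3 : |φ g - φ (g * (a * b))| ≤ |φ g - φ (g * a)| + |φ (g * a) - φ (g * a * b)| := by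
            rw [← mul_assoc]
            exact abs_sub_le _ _ _
          push_cast
          linarith
      exact ⟨3 * k, by rintro r ⟨g, rfl⟩; exact hcl k y hk g⟩
    have hidx2 : (lucSubgroup φ).index ≠ 0 :=
      fun h0 => hidx (Nat.eq_zero_of_zero_dvd (h0 ▸ Subgroup.index_dvd_of_le hle))
    obtain ⟨D, hself, hsymm, htri, hnn, hinv, hcont, hunbD⟩ :=
      exists_unbounded_invariant_pseudometric φ hluc hunb hidx2
    exact not_hasPropertyOB_of_pseudometric D hself hsymm htri hnn hinv hcont hunbD

end crux

/-- For a Polish group `G` the following are equivalent: (1) `G` is bounded;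
(2) every left-uniformly continuous `φ : G → ℝ` is bounded; (3) `G` has property (OB) and every
open subgroup of `G` has finite index. -/
theorem statement2 (G : Type u) [Group G] [TopologicalSpace G] [IsTopologicalGroup G]
    [PolishSpace G] :
    (BoundedTopGroup G ↔ ∀ φ : G → ℝ, LeftUniformlyCts φ → ∃ C : ℝ, ∀ g : G, |φ g| ≤ C) ∧
    (BoundedTopGroup G ↔
      (HasPropertyOB G ∧ ∀ H : Subgroup G, IsOpen (H : Set G) → H.index ≠ 0)) := by
  constructor
  · constructor
    · exact fun hB => bounded_imp_luc_bounded hB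
    · intro h2
      by_contra hnb
      obtain ⟨⟨φ, hluc, hunb⟩, _⟩ := crux hnb
      obtain ⟨C, hC⟩ := h2 φ hluc
      obtain ⟨g, hg⟩ := hunb C
      exact absurd (hC g) (not_le.mpr hg)
  · constructor
    · exact fun hB => ⟨bounded_imp_OB hB, bounded_imp_index hB⟩
    · rintro ⟨hOB, hidx⟩
      by_contra hnb
      obtain ⟨_, hor⟩ := crux hnb
      rcases hor with hnOB | ⟨H, hHo, h0⟩
      · exact hnOB hOB
      · exact hidx H hHo h0
end

section
/- A Polish group G is Roelcke precompact if and only if for every n ≥ 1 and every open neighbourhood V of the identity there is a finite set F ⊆ G such that for all g₁,…,gₙ ∈ G there exist v ∈ V, f₁,…,fₙ ∈ F and v₁,…,vₙ ∈ V with gᵢ = v fᵢ vᵢ for all i = 1,…,n. -/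
open Pointwise

/-- A topological group `G` is Roelcke precompact if for every open neighbourhood `V` of the
identity there is a finite set `F ⊆ G` with `G = V F V`. -/
def RoelckePrecompact (G : Type*) [Group G] [TopologicalSpace G] : Prop :=
  ∀ V : Set G, IsOpen V → (1 : G) ∈ V → ∃ F : Set G, F.Finite ∧ V * F * V = Set.univ

lemma rp_one_case {G : Type*} [Group G] [TopologicalSpace G] (h : RoelckePrecompact G)
    (V : Set G) (hVo : IsOpen V) (hV1 : (1 : G) ∈ V) :
    ∃ F : Set G, F.Finite ∧ ∀ g : G, ∃ v ∈ V, ∃ f ∈ F, ∃ w ∈ V, g = v * f * w := by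
  obtain ⟨F, hFf, hF⟩ := h V hVo hV1
  refine ⟨F, hFf, fun g => ?_⟩
  have hg : g ∈ V * F * V := by rw [hF]; trivial
  obtain ⟨a, ha, w, hw, hgw⟩ := hg
  obtain ⟨v, hv, f, hf, hvf⟩ := ha
  exact ⟨v, hv, f, hf, w, hw, by rw [← hgw, ← hvf]⟩

lemma rp_key {G : Type*} [Group G] [TopologicalSpace G] [IsTopologicalGroup G]
    (h : RoelckePrecompact G) :
    ∀ n : ℕ, ∀ V : Set G, IsOpen V → (1 : G) ∈ V →
      ∃ F : Set G, F.Finite ∧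
        ∀ g : Fin n → G, ∃ v ∈ V, ∃ f : Fin n → G, (∀ i, f i ∈ F) ∧
          ∃ w : Fin n → G, (∀ i, w i ∈ V) ∧ ∀ i, g i = v * f i * w i := by
  intro n
  induction n with
  | zero =>
    intro V _ hV1
    exact ⟨∅, Set.finite_empty, fun g =>
      ⟨1, hV1, Fin.elim0, fun i => i.elim0, Fin.elim0, fun i => i.elim0, fun i => i.elim0⟩⟩
  | succ n ih =>
    intro V hVo hV1
    obtain ⟨U₁, hU₁o, hU₁1, hU₁V⟩ := exists_open_nhds_one_mul_subset (hVo.mem_nhds hV1)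
    obtain ⟨Fn, hFnf, hFn⟩ := ih U₁ hU₁o hU₁1
    set C : Set G := U₁ ∩ ⋂ f ∈ Fn, (fun u => f⁻¹ * u⁻¹ * f) ⁻¹' U₁ with hC
    have hCo : IsOpen C := by
      refine hU₁o.inter (hFnf.isOpen_biInter fun f _ => hU₁o.preimage ?_)
      exact (continuous_const.mul continuous_inv).mul continuous_const
    have hC1 : (1 : G) ∈ C := by
      refine ⟨hU₁1, Set.mem_iInter₂.2 fun f _ => ?_⟩
      simpa using hU₁1
    obtain ⟨F1, hF1f, hF1⟩ := rp_one_case h C hCo hC1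
    refine ⟨Fn ∪ F1, hFnf.union hF1f, fun g => ?_⟩
    obtain ⟨v, hv, f, hf, w, hw, hgw⟩ := hFn (g ∘ Fin.castSucc)
    obtain ⟨u₁, hu₁, f', hf', u₂, hu₂, hlast⟩ := hF1 (v⁻¹ * g (Fin.last n))
    have hU₁sub : U₁ ⊆ V := fun u hu => by
      have := hU₁V (Set.mul_mem_mul hu hU₁1); simpa using this
    have hu₁conj : ∀ i, (f i)⁻¹ * u₁⁻¹ * f i ∈ U₁ := fun i =>
      Set.mem_iInter₂.1 hu₁.2 (f i) (hf i)
    refine ⟨v * u₁, hU₁V (Set.mul_mem_mul hv hu₁.1),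
      Fin.snoc f f', ?_,
      Fin.snoc (fun i => (f i)⁻¹ * u₁⁻¹ * f i * w i) u₂, ?_, ?_⟩
    · intro i
      refine Fin.lastCases ?_ (fun j => ?_) i
      · simp only [Fin.snoc_last]; exact Or.inr hf'
      · simp only [Fin.snoc_castSucc]; exact Or.inl (hf j)
    · intro i
      refine Fin.lastCases ?_ (fun j => ?_) i
      · simp only [Fin.snoc_last]; exact hU₁sub hu₂.1
      · simp only [Fin.snoc_castSucc]
        exact hU₁V (Set.mul_mem_mul (hu₁conj j) (hw j))
    · intro i
      refine Fin.lastCases ?_ (fun j => ?_) i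
      · simp only [Fin.snoc_last]
        have : g (Fin.last n) = v * (u₁ * f' * u₂) := by
          rw [← hlast]; group
        rw [this]; group
      · simp only [Fin.snoc_castSucc]
        have := hgw j
        simp only [Function.comp_apply] at this
        rw [this]; group

/-- A Polish group `G` is Roelcke precompact if and only if for every `n ≥ 1`
and every open neighbourhood `V` of the identity there is a finite set `F ⊆ G` such that for all
`g₁, …, gₙ ∈ G` there exist `v ∈ V`, `f₁, …, fₙ ∈ F` and `v₁, …, vₙ ∈ V` with `gᵢ = v fᵢ vᵢ`
for all `i = 1, …, n`. -/
theorem statement4 (G : Type*) [Group G] [TopologicalSpace G] [IsTopologicalGroup G]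
    [PolishSpace G] :
    RoelckePrecompact G ↔
      ∀ n : ℕ, 1 ≤ n → ∀ V : Set G, IsOpen V → (1 : G) ∈ V →
        ∃ F : Set G, F.Finite ∧
          ∀ g : Fin n → G, ∃ v ∈ V, ∃ f : Fin n → G, (∀ i, f i ∈ F) ∧
            ∃ w : Fin n → G, (∀ i, w i ∈ V) ∧ ∀ i, g i = v * f i * w i := by
  constructor
  · intro h n _ V hVo hV1
    exact rp_key h n V hVo hV1
  · intro h V hVo hV1
    obtain ⟨F, hFf, hF⟩ := h 1 le_rfl V hVo hV1
    refine ⟨F, hFf, Set.eq_univ_of_forall fun g => ?_⟩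
    obtain ⟨v, hv, f, hf, w, hw, hgw⟩ := hF (fun _ => g)
    have : g = v * f 0 * w 0 := hgw 0
    rw [this]
    exact Set.mul_mem_mul (Set.mul_mem_mul hv (hf 0)) (hw 0)
end

section
/- Let G be a Roelcke precompact Polish group acting continuously by isometries on a metric space (X,d) with a dense orbit. Then for every open neighbourhood U of the identity, every ε > 0 and every n ≥ 1 there is a finite set A ⊆ Xⁿ such that U·A is ε-dense in Xⁿ with respect to the supremum metric d_∞, where G acts diagonally on Xⁿ and d_∞((x₁,…,xₙ),(y₁,…,yₙ)) = max_i d(xᵢ,yᵢ). -/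
open Pointwise

/-- Let `G` be a Roelcke precompact Polish group acting continuously by
isometries on a metric space `(X, d)` with a dense orbit. Then for every open neighbourhood `U`
of `1`, every `ε > 0` and every `n ≥ 1` there is a finite set `A ⊆ Xⁿ` such that `U·A` is
`ε`-dense in `Xⁿ` for the supremum metric (which is the metric on `Fin n → X`), `G` acting
diagonally on `Xⁿ`. -/
theorem statement5 {G : Type*} [Group G] [TopologicalSpace G] [IsTopologicalGroup G] [PolishSpace G]
    {X : Type*} [MetricSpace X] [MulAction G X]
    (hRP : RoelckePrecompact G)
    (hcont : Continuous fun p : G × X => p.1 • p.2)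
    (hiso : ∀ g : G, Isometry fun x : X => g • x)
    (hdense : ∃ x : X, Dense (Set.range fun g : G => g • x)) :
    ∀ U : Set G, IsOpen U → (1 : G) ∈ U → ∀ ε : ℝ, 0 < ε → ∀ n : ℕ, 1 ≤ n →
      ∃ A : Set (Fin n → X), A.Finite ∧
        ∀ y : Fin n → X, ∃ g ∈ U, ∃ a ∈ A, dist (fun i => g • a i) y ≤ ε := by
  obtain ⟨x₀, hx₀⟩ := hdense
  suffices H : ∀ n : ℕ, ∀ U : Set G, IsOpen U → (1 : G) ∈ U → ∀ ε : ℝ, 0 < ε →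
      ∃ A : Set (Fin n → X), A.Finite ∧
        ∀ y : Fin n → X, ∃ g ∈ U, ∃ a ∈ A, ∀ i, dist (g • a i) (y i) ≤ ε by
    intro U hU h1U ε hε n _
    obtain ⟨A, hAfin, hA⟩ := H n U hU h1U ε hε
    refine ⟨A, hAfin, fun y => ?_⟩
    obtain ⟨g, hg, a, ha, h⟩ := hA y
    exact ⟨g, hg, a, ha, (dist_pi_le_iff hε.le).2 h⟩
  intro n
  induction n with
  | zero =>
    intro U hU h1U ε hε
    exact ⟨{fun i => i.elim0}, Set.finite_singleton _,
      fun y => ⟨1, h1U, _, rfl, fun i => i.elim0⟩⟩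
  | succ n ih =>
    intro U hU h1U ε hε
    obtain ⟨W, hWopen, h1W, hWW⟩ := exists_open_nhds_one_mul_subset (hU.mem_nhds h1U)
    have hcont' : ∀ x : X, Continuous fun g : G => g • x := fun x =>
      hcont.comp (continuous_id.prodMk continuous_const)
    set V : Set G := W ∩ {g | dist (g • x₀) x₀ < ε / 4} with hVdef
    have hVopen : IsOpen V :=
      hWopen.inter (isOpen_lt (continuous_dist.comp
        ((hcont' x₀).prodMk continuous_const)) continuous_const)
    have h1V : (1 : G) ∈ V := ⟨h1W, by simp [hε.le]; positivity⟩
    obtain ⟨F, hFfin, hFcov⟩ := hRP V hVopen h1V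
    set U' : Set G := W ∩ ⋂ f ∈ F, {h : G | dist (h • (f • x₀)) (f • x₀) < ε / 4} with hU'def
    have hU'open : IsOpen U' := by
      refine hWopen.inter (Set.Finite.isOpen_biInter hFfin fun f _ => ?_)
      exact isOpen_lt (continuous_dist.comp
        ((hcont' (f • x₀)).prodMk continuous_const)) continuous_const
    have h1U' : (1 : G) ∈ U' := by
      refine ⟨h1W, Set.mem_iInter₂.2 fun f _ => ?_⟩
      simp only [Set.mem_setOf_eq, one_smul, dist_self]
      positivity
    obtain ⟨B, hBfin, hB⟩ := ih U' hU'open h1U' ε hε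
    refine ⟨(fun p : G × (Fin n → X) => Fin.cons (p.1 • x₀) p.2) '' (F ×ˢ B),
      (hFfin.prod hBfin).image _, fun y => ?_⟩
    obtain ⟨z, ⟨g, rfl⟩, hgz⟩ := hx₀.exists_dist_lt (y 0) (by positivity : (0 : ℝ) < ε / 4)
    have hgmem : g ∈ V * F * V := by rw [hFcov]; trivial
    rw [Set.mem_mul] at hgmem
    obtain ⟨p, hp, w, hw, hpw⟩ := hgmem
    rw [Set.mem_mul] at hp
    obtain ⟨v, hv, f, hf, rfl⟩ := hp
    obtain ⟨h, hh, c, hc, hhc⟩ := hB fun i => v⁻¹ • y i.succ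
    refine ⟨v * h, hWW (Set.mul_mem_mul hv.1 hh.1), Fin.cons (f • x₀) c,
      ⟨(f, c), ⟨hf, hc⟩, rfl⟩, fun i => ?_⟩
    refine Fin.cases ?_ (fun j => ?_) i
    · rw [Fin.cons_zero]
      have h1 : dist ((v * h) • (f • x₀)) (v • (f • x₀)) < ε / 4 := by
        rw [mul_smul, (hiso v).dist_eq]
        exact (Set.mem_iInter₂.1 hh.2 f hf)
      have h2 : dist (v • (f • x₀)) (g • x₀) < ε / 4 := by
        rw [← hpw, mul_smul, mul_smul, (hiso v).dist_eq, (hiso f).dist_eq, dist_comm]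
        exact hw.2
      have h3 : dist (g • x₀) (y 0) < ε / 4 := by rw [dist_comm]; exact hgz
      calc dist ((v * h) • (f • x₀)) (y 0)
          ≤ dist ((v * h) • (f • x₀)) (v • (f • x₀))
            + dist (v • (f • x₀)) (g • x₀) + dist (g • x₀) (y 0) := dist_triangle4 _ _ _ _
        _ ≤ ε / 4 + ε / 4 + ε / 4 := by linarith
        _ ≤ ε := by linarith
    · have := hhc j
      rw [Fin.cons_succ, mul_smul]
      calc dist (v • h • c j) (y j.succ)
          = dist (h • c j) (v⁻¹ • y j.succ) := by
            rw [← (hiso v).dist_eq (h • c j) (v⁻¹ • y j.succ), smul_inv_smul]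
        _ ≤ ε := this
end

section
/- Let G be a Polish group and suppose there is an open subgroup V ≤ G such that for every finite set F ⊆ G and every k ≥ 1, G ≠ (VF)^k (the set of products of k elements of VF). Then there is a countable metric space (X,d) with d(x,y) ≥ 1 for all distinct x, y ∈ X, and a transitive continuous action of G by isometries on X such that X has infinite diameter. -/
open Pointwise
open Topology

namespace St7Aux

variable {G : Type*} [Group G] (V : Subgroup G) (u : ℕ → G)

/-- One "letter" block: `V · {u n, (u n)⁻¹}`. -/
def T (n : ℕ) : Set G := (V : Set G) * {u n, (u n)⁻¹}

/-- Words: `V s₁ V s₂ ⋯ V s_k V`. -/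
def W (L : List ℕ) : Set G := L.foldr (fun n s => T V u n * s) (V : Set G)

/-- Cost of a word. -/
def cost (L : List ℕ) : ℕ := (L.map (· + 1)).sum

lemma W_nil : W V u [] = (V : Set G) := rfl
lemma W_cons (n : ℕ) (L : List ℕ) : W V u (n :: L) = T V u n * W V u L := rfl

lemma V_mul_W (L : List ℕ) : (V : Set G) * W V u L = W V u L := by
  induction L with
  | nil => rw [W_nil, coe_mul_coe]
  | cons n L ih => simp only [W_cons, T, ← mul_assoc, coe_mul_coe]

lemma W_mul_V (L : List ℕ) : W V u L * (V : Set G) = W V u L := by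
  induction L with
  | nil => rw [W_nil, coe_mul_coe]
  | cons n L ih => rw [W_cons, mul_assoc, ih]

lemma W_append (A B : List ℕ) : W V u (A ++ B) = W V u A * W V u B := by
  induction A with
  | nil => rw [List.nil_append, W_nil, V_mul_W]
  | cons n A ih => rw [List.cons_append, W_cons, W_cons, ih, mul_assoc]

lemma pair_inv (n : ℕ) : ({u n, (u n)⁻¹} : Set G)⁻¹ = {u n, (u n)⁻¹} := by
  ext x
  simp only [Set.mem_inv, Set.mem_insert_iff, Set.mem_singleton_iff]
  constructor
  · rintro (h | h)
    · right; rw [← h, inv_inv]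
    · left; rw [inv_eq_iff_eq_inv] at h; rw [h, inv_inv]
  · rintro (h | h)
    · right; rw [h]
    · left; rw [h, inv_inv]

lemma W_inv_subset (L : List ℕ) : (W V u L)⁻¹ ⊆ W V u L.reverse := by
  induction L with
  | nil => rw [List.reverse_nil, W_nil, inv_coe_set]
  | cons n L ih =>
    rw [W_cons, mul_inv_rev, List.reverse_cons, W_append]
    have h1 : (T V u n)⁻¹ ⊆ W V u [n] := by
      rw [T, mul_inv_rev, pair_inv, inv_coe_set, W_cons, W_nil, T]
      rintro x ⟨p, hp, v, hv, rfl⟩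
      exact Set.mul_mem_mul (by simpa using Set.mul_mem_mul V.one_mem hp) hv
    exact Set.mul_subset_mul ih h1

lemma cost_reverse (L : List ℕ) : cost L.reverse = cost L := by
  unfold cost
  rw [List.map_reverse, List.sum_reverse]

lemma cost_append (A B : List ℕ) : cost (A ++ B) = cost A + cost B := by
  simp [cost]

/-- The length function. -/
noncomputable def len (g : G) : ℕ := sInf (cost '' {L | g ∈ W V u L})

lemma len_le {g : G} {L : List ℕ} (h : g ∈ W V u L) : len V u g ≤ cost L :=
  Nat.sInf_le ⟨L, h, rfl⟩

lemma cost_le {L : List ℕ} {n : ℕ} (h : n ∈ L) : n + 1 ≤ cost L :=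
  List.single_le_sum (by simp) _ (List.mem_map_of_mem h)

lemma length_le_cost (L : List ℕ) : L.length ≤ cost L := by
  induction L with
  | nil => simp [cost]
  | cons n L ih => simp only [cost, List.map_cons, List.sum_cons, List.length_cons] at *; omega

lemma W_subset_pow {F : Set G} (h1 : (1 : G) ∈ F) {L : List ℕ}
    (hL : ∀ n ∈ L, u n ∈ F ∧ (u n)⁻¹ ∈ F) :
    W V u L ⊆ ((V : Set G) * F) ^ (L.length + 1) := by
  induction L with
  | nil =>
    rw [W_nil, List.length_nil, pow_one]
    exact Set.subset_mul_left _ h1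
  | cons n L ih =>
    rw [W_cons, List.length_cons, pow_succ']
    have hT : T V u n ⊆ (V : Set G) * F := by
      apply Set.mul_subset_mul_left
      intro x hx
      rcases hx with h | h
      · rw [h]; exact (hL n (by simp)).1
      · rw [Set.mem_singleton_iff] at h; rw [h]; exact (hL n (by simp)).2
    exact Set.mul_subset_mul hT (ih fun m hm => hL m (by simp [hm]))


lemma mem_W_left_iff {v : G} (hv : v ∈ V) {g : G} {L : List ℕ} :
    v * g ∈ W V u L ↔ g ∈ W V u L := by
  constructor
  · intro h
    have hg : g = v⁻¹ * (v * g) := by group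
    rw [hg, ← V_mul_W V u L]
    exact Set.mul_mem_mul (V.inv_mem hv) h
  · intro h
    rw [← V_mul_W V u L]
    exact Set.mul_mem_mul hv h

lemma mem_W_right_iff {v : G} (hv : v ∈ V) {g : G} {L : List ℕ} :
    g * v ∈ W V u L ↔ g ∈ W V u L := by
  constructor
  · intro h
    have hg : g = (g * v) * v⁻¹ := by group
    rw [hg, ← W_mul_V V u L]
    exact Set.mul_mem_mul h (V.inv_mem hv)
  · intro h
    rw [← W_mul_V V u L]
    exact Set.mul_mem_mul h hv

lemma len_left_mul {v : G} (hv : v ∈ V) (g : G) : len V u (v * g) = len V u g := by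
  unfold len
  rw [show {L | v * g ∈ W V u L} = {L | g ∈ W V u L} from
    Set.ext fun L => mem_W_left_iff V u hv]

lemma len_right_mul {v : G} (hv : v ∈ V) (g : G) : len V u (g * v) = len V u g := by
  unfold len
  rw [show {L | g * v ∈ W V u L} = {L | g ∈ W V u L} from
    Set.ext fun L => mem_W_right_iff V u hv]

lemma cost_image_inv (g : G) :
    cost '' {L | g⁻¹ ∈ W V u L} = cost '' {L | g ∈ W V u L} := by
  have key : ∀ x : G, cost '' {L | x⁻¹ ∈ W V u L} ⊆ cost '' {L | x ∈ W V u L} := by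
    rintro x c ⟨L, hL, rfl⟩
    refine ⟨L.reverse, ?_, cost_reverse L⟩
    exact W_inv_subset V u L (Set.mem_inv.mpr hL)
  refine subset_antisymm (key g) ?_
  have := key g⁻¹
  simpa using this

lemma len_inv (g : G) : len V u g⁻¹ = len V u g :=
  congrArg sInf (cost_image_inv V u g)

/-- Distance function on the quotient `G ⧸ V`. -/
noncomputable def dQ : G ⧸ V → G ⧸ V → ℝ := fun x y =>
  Quotient.liftOn₂' x y (fun a b => (len V u (a⁻¹ * b) : ℝ)) (by
    intro a₁ a₂ b₁ b₂ h₁ h₂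
    rw [QuotientGroup.leftRel_apply] at h₁ h₂
    show (len V u (a₁⁻¹ * a₂) : ℝ) = (len V u (b₁⁻¹ * b₂) : ℝ)
    have key : b₁⁻¹ * b₂ = (a₁⁻¹ * b₁)⁻¹ * ((a₁⁻¹ * a₂) * (a₂⁻¹ * b₂)) := by group
    rw [key, len_left_mul V u (V.inv_mem h₁), len_right_mul V u h₂])

lemma dQ_mk (a b : G) :
    dQ V u (Quotient.mk'' a) (Quotient.mk'' b) = (len V u (a⁻¹ * b) : ℝ) := rfl

/-- Left translation action on the quotient. -/
def rhoQ (g : G) : G ⧸ V → G ⧸ V :=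
  Quotient.map' (fun a => g * a) (by
    intro a b h
    rw [QuotientGroup.leftRel_apply] at h ⊢
    have : (g * a)⁻¹ * (g * b) = a⁻¹ * b := by group
    rw [this]
    exact h)

lemma rhoQ_mk (g a : G) : rhoQ V g (Quotient.mk'' a) = Quotient.mk'' (g * a) := rfl

variable [TopologicalSpace G] [IsTopologicalGroup G]
variable (hV : IsOpen (V : Set G)) (hu : DenseRange u)

include hV hu

lemma exists_mem_W (g : G) : ∃ L, g ∈ W V u L := by
  have hopen : IsOpen {h : G | g⁻¹ * h ∈ V} :=
    hV.preimage (continuous_const.mul continuous_id)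
  obtain ⟨n, hn⟩ := hu.exists_mem_open hopen ⟨g, by simp [V.one_mem]⟩
  have hn' : (u n)⁻¹ * g ∈ V := by
    have := V.inv_mem hn
    simpa using this
  refine ⟨[n], ?_⟩
  have hg : g = (1 * u n) * ((u n)⁻¹ * g) := by group
  rw [W_cons, W_nil, T, hg]
  exact Set.mul_mem_mul (Set.mul_mem_mul V.one_mem (by simp)) hn'

lemma len_spec (g : G) : ∃ L, g ∈ W V u L ∧ cost L = len V u g := by
  have hne : (cost '' {L | g ∈ W V u L}).Nonempty := by
    obtain ⟨L, hL⟩ := exists_mem_W V u hV hu g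
    exact ⟨cost L, L, hL, rfl⟩
  obtain ⟨L, hL, hc⟩ := Nat.sInf_mem hne
  exact ⟨L, hL, hc⟩

lemma len_mul_le (a b : G) : len V u (a * b) ≤ len V u a + len V u b := by
  obtain ⟨L₁, h₁, hc₁⟩ := len_spec V u hV hu a
  obtain ⟨L₂, h₂, hc₂⟩ := len_spec V u hV hu b
  have : a * b ∈ W V u (L₁ ++ L₂) := by
    rw [W_append]; exact Set.mul_mem_mul h₁ h₂
  calc len V u (a * b) ≤ cost (L₁ ++ L₂) := len_le V u this
    _ = len V u a + len V u b := by rw [cost_append, hc₁, hc₂]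

lemma len_eq_zero_of_mem {g : G} (h : g ∈ V) : len V u g = 0 :=
  Nat.le_zero.mp (len_le V u (L := []) h)

lemma mem_of_len_eq_zero {g : G} (h : len V u g = 0) : g ∈ V := by
  obtain ⟨L, hL, hc⟩ := len_spec V u hV hu g
  rw [h] at hc
  cases L with
  | nil => exact hL
  | cons n L => simp [cost] at hc

lemma exists_len_large
    (hbig : ∀ F : Set G, F.Finite → ∀ k : ℕ, 1 ≤ k → ((V : Set G) * F) ^ k ≠ Set.univ)
    (N : ℕ) : ∃ g : G, N < len V u g := by
  by_contra h
  push_neg at h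
  set F : Set G := (fun i => u i) '' Set.Iic N ∪ (fun i => (u i)⁻¹) '' Set.Iic N ∪ {1} with hF
  have hFfin : F.Finite := by
    apply Set.Finite.union
    apply Set.Finite.union <;> exact (Set.finite_Iic N).image _
    exact Set.finite_singleton 1
  have h1F : (1 : G) ∈ F := by simp [hF]
  apply hbig F hFfin (N + 1) (by omega)
  apply Set.eq_univ_of_univ_subset
  intro g _
  obtain ⟨L, hL, hc⟩ := len_spec V u hV hu g
  have hcN : cost L ≤ N := hc ▸ h g
  have hmem : ∀ n ∈ L, u n ∈ F ∧ (u n)⁻¹ ∈ F := by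
    intro n hn
    have : n ≤ N := by have := cost_le (L := L) hn; omega
    constructor
    · exact Or.inl (Or.inl ⟨n, this, rfl⟩)
    · exact Or.inl (Or.inr ⟨n, this, rfl⟩)
  have hsub := W_subset_pow V u h1F hmem
  have hlen : L.length + 1 ≤ N + 1 := by have := length_le_cost L; omega
  have h1VF : (1 : G) ∈ (V : Set G) * F := ⟨1, V.one_mem, 1, h1F, mul_one 1⟩
  exact Set.pow_subset_pow_right h1VF hlen (hsub hL)

/-- A wrapper around a set of naturals, carrying no instances. -/
structure Carrier (s : Set ℕ) : Type where
  elem : ℕ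
  mem : elem ∈ s

/-- The wrapper is equivalent to the subtype. -/
def carrierEquiv (s : Set ℕ) : Carrier s ≃ ↥s where
  toFun x := ⟨x.elem, x.mem⟩
  invFun x := ⟨x.1, x.2⟩
  left_inv x := rfl
  right_inv x := rfl

omit hV hu in
lemma carrier_countable (s : Set ℕ) : Countable (Carrier s) :=
  Function.Injective.countable (f := fun x : Carrier s => x.elem)
    fun a b h => by cases a; cases b; simpa using h

end St7Aux

/-- Let `G` be a Polish group with an open subgroup `V` such that for every
finite `F ⊆ G` and every `k ≥ 1`, `G ≠ (VF)^k`. Then there is a countable metric space `(X, d)`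
with `d(x,y) ≥ 1` for distinct `x, y` (hence discrete) and a transitive continuous action of `G`
by isometries on `X` such that `X` has infinite diameter. -/
theorem statement7 {G : Type*} [Group G] [TopologicalSpace G] [IsTopologicalGroup G] [PolishSpace G]
    (V : Subgroup G) (hV : IsOpen (V : Set G))
    (hbig : ∀ F : Set G, F.Finite → ∀ k : ℕ, 1 ≤ k → ((V : Set G) * F) ^ k ≠ Set.univ) :
    ∃ (X : Type) (_ : MetricSpace X) (_ : Countable X) (ρ : G → X → X),
      (∀ x : X, ρ 1 x = x) ∧
      (∀ g h : G, ∀ x : X, ρ (g * h) x = ρ g (ρ h x)) ∧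
      (∀ g : G, Isometry (ρ g)) ∧
      Continuous (fun p : G × X => ρ p.1 p.2) ∧
      (∀ x y : X, ∃ g : G, ρ g x = y) ∧
      (∀ x y : X, x ≠ y → 1 ≤ dist x y) ∧
      (∀ C : ℝ, ∃ x y : X, C < dist x y) := by
  classical
  haveI : Nonempty G := ⟨1⟩
  obtain ⟨u, hu⟩ := TopologicalSpace.exists_dense_seq G
  -- facts about the quotient distance
  have hd_self : ∀ y : G ⧸ V, St7Aux.dQ V u y y = 0 := by
    refine fun y => Quotient.inductionOn' y fun a => ?_
    rw [St7Aux.dQ_mk, inv_mul_cancel]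
    exact_mod_cast St7Aux.len_eq_zero_of_mem V u hV hu V.one_mem
  have hd_comm : ∀ y z : G ⧸ V, St7Aux.dQ V u y z = St7Aux.dQ V u z y := by
    refine fun y z => Quotient.inductionOn₂' y z fun a b => ?_
    rw [St7Aux.dQ_mk, St7Aux.dQ_mk]
    have : b⁻¹ * a = (a⁻¹ * b)⁻¹ := by group
    rw [this, St7Aux.len_inv]
  have hd_tri : ∀ x y z : G ⧸ V,
      St7Aux.dQ V u x z ≤ St7Aux.dQ V u x y + St7Aux.dQ V u y z := by
    refine fun x y z => Quotient.inductionOn₃' x y z fun a b c => ?_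
    rw [St7Aux.dQ_mk, St7Aux.dQ_mk, St7Aux.dQ_mk]
    have key : a⁻¹ * c = (a⁻¹ * b) * (b⁻¹ * c) := by group
    rw [key]
    exact_mod_cast St7Aux.len_mul_le V u hV hu (a⁻¹ * b) (b⁻¹ * c)
  have hd_eq : ∀ y z : G ⧸ V, St7Aux.dQ V u y z = 0 → y = z := by
    refine fun y z => Quotient.inductionOn₂' y z fun a b h => ?_
    rw [St7Aux.dQ_mk] at h
    have h0 : St7Aux.len V u (a⁻¹ * b) = 0 := by exact_mod_cast h
    exact Quotient.sound' (QuotientGroup.leftRel_apply.mpr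
      (St7Aux.mem_of_len_eq_zero V u hV hu h0))
  have hd_one : ∀ y z : G ⧸ V, y ≠ z → 1 ≤ St7Aux.dQ V u y z := by
    refine fun y z => Quotient.inductionOn₂' y z fun a b hne => ?_
    rw [St7Aux.dQ_mk]
    have h0 : St7Aux.len V u (a⁻¹ * b) ≠ 0 := by
      intro h
      exact hne (Quotient.sound' (QuotientGroup.leftRel_apply.mpr
        (St7Aux.mem_of_len_eq_zero V u hV hu h)))
    exact_mod_cast Nat.one_le_iff_ne_zero.mpr h0
  have hd_iso : ∀ (g : G) (y z : G ⧸ V),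
      St7Aux.dQ V u (St7Aux.rhoQ V g y) (St7Aux.rhoQ V g z) = St7Aux.dQ V u y z := by
    refine fun g y z => Quotient.inductionOn₂' y z fun a b => ?_
    rw [St7Aux.rhoQ_mk, St7Aux.rhoQ_mk, St7Aux.dQ_mk, St7Aux.dQ_mk]
    have : (g * a)⁻¹ * (g * b) = a⁻¹ * b := by group
    rw [this]
  -- countability of the quotient
  have hsurj : Function.Surjective (fun n : ℕ => (Quotient.mk'' (u n) : G ⧸ V)) := by
    intro x
    obtain ⟨a, rfl⟩ := Quotient.mk''_surjective x
    have hopen : IsOpen {h : G | a⁻¹ * h ∈ V} :=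
      hV.preimage (continuous_const.mul continuous_id)
    obtain ⟨n, hn⟩ := hu.exists_mem_open hopen ⟨a, by simp [V.one_mem]⟩
    refine ⟨n, Quotient.sound' (QuotientGroup.leftRel_apply.mpr ?_)⟩
    have := V.inv_mem hn
    simpa using this
  haveI hQcount : Countable (G ⧸ V) := hsurj.countable
  obtain ⟨emb⟩ := nonempty_embedding_nat (G ⧸ V)
  set X : Type := St7Aux.Carrier (Set.range (⇑emb)) with hX
  let e : G ⧸ V ≃ X :=
    (Equiv.ofInjective _ emb.injective).trans (St7Aux.carrierEquiv _).symm
  letI instX : MetricSpace X :=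
    { dist := fun x y => St7Aux.dQ V u (e.symm x) (e.symm y)
      dist_self := fun x => hd_self _
      dist_comm := fun x y => hd_comm _ _
      dist_triangle := fun x y z => hd_tri _ _ _
      eq_of_dist_eq_zero := fun h => e.symm.injective (hd_eq _ _ h) }
  haveI hXcount : Countable X := St7Aux.carrier_countable _
  refine ⟨X, instX, hXcount, fun g x => e (St7Aux.rhoQ V g (e.symm x)),
    ?_, ?_, ?_, ?_, ?_, ?_, ?_⟩
  · -- identity
    intro x
    have h1 : ∀ y : G ⧸ V, St7Aux.rhoQ V 1 y = y := by
      refine fun y => Quotient.inductionOn' y fun a => ?_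
      rw [St7Aux.rhoQ_mk, one_mul]
    show e (St7Aux.rhoQ V 1 (e.symm x)) = x
    rw [h1, Equiv.apply_symm_apply]
  · -- action compatibility
    intro g h x
    have h1 : ∀ y : G ⧸ V, St7Aux.rhoQ V (g * h) y = St7Aux.rhoQ V g (St7Aux.rhoQ V h y) := by
      refine fun y => Quotient.inductionOn' y fun a => ?_
      rw [St7Aux.rhoQ_mk, St7Aux.rhoQ_mk, St7Aux.rhoQ_mk, mul_assoc]
    show e (St7Aux.rhoQ V (g * h) (e.symm x)) =
      e (St7Aux.rhoQ V g (e.symm (e (St7Aux.rhoQ V h (e.symm x)))))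
    rw [h1, Equiv.symm_apply_apply]
  · -- isometry
    intro g
    refine Isometry.of_dist_eq fun x y => ?_
    show St7Aux.dQ V u (e.symm (e _)) (e.symm (e _)) = St7Aux.dQ V u (e.symm x) (e.symm y)
    rw [Equiv.symm_apply_apply, Equiv.symm_apply_apply]
    exact hd_iso g _ _
  · -- continuity
    have hsingleton : ∀ x : X, IsOpen ({x} : Set X) := by
      intro x
      rw [Metric.isOpen_singleton_iff]
      refine ⟨1, one_pos, fun y hy => ?_⟩
      by_contra hne
      have := hd_one (e.symm y) (e.symm x) fun h => hne (e.symm.injective h)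
      have hd : dist y x = St7Aux.dQ V u (e.symm y) (e.symm x) := rfl
      rw [hd] at hy
      linarith
    rw [continuous_iff_continuousAt]
    rintro ⟨g, x⟩
    rw [ContinuousAt, Filter.tendsto_def]
    intro s hs
    obtain ⟨a, ha⟩ := Quotient.mk''_surjective (e.symm x)
    have hUopen : IsOpen {h : G | a⁻¹ * (g⁻¹ * h) * a ∈ V} :=
      hV.preimage (by fun_prop)
    have hgU : g ∈ {h : G | a⁻¹ * (g⁻¹ * h) * a ∈ V} := by
      simp only [Set.mem_setOf_eq, inv_mul_cancel, mul_one]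
      simpa using V.one_mem
    have hkey : ∀ h ∈ {h : G | a⁻¹ * (g⁻¹ * h) * a ∈ V},
        e (St7Aux.rhoQ V h (e.symm x)) = e (St7Aux.rhoQ V g (e.symm x)) := by
      intro h hh
      congr 1
      rw [← ha, St7Aux.rhoQ_mk, St7Aux.rhoQ_mk]
      refine Quotient.sound' (QuotientGroup.leftRel_apply.mpr ?_)
      have hid : (h * a)⁻¹ * (g * a) = (a⁻¹ * (g⁻¹ * h) * a)⁻¹ := by group
      rw [hid]
      exact V.inv_mem hh
    have hprod : {h : G | a⁻¹ * (g⁻¹ * h) * a ∈ V} ×ˢ ({x} : Set X) ∈ 𝓝 (g, x) :=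
      prod_mem_nhds (hUopen.mem_nhds hgU) ((hsingleton x).mem_nhds rfl)
    refine Filter.mem_of_superset hprod ?_
    rintro ⟨h, y⟩ ⟨hh, hy⟩
    have hy' : y = x := hy
    show e (St7Aux.rhoQ V h (e.symm y)) ∈ s
    rw [hy', hkey h hh]
    exact mem_of_mem_nhds hs
  · -- transitivity
    intro x y
    obtain ⟨a, ha⟩ := Quotient.mk''_surjective (e.symm x)
    obtain ⟨b, hb⟩ := Quotient.mk''_surjective (e.symm y)
    refine ⟨b * a⁻¹, ?_⟩
    show e (St7Aux.rhoQ V (b * a⁻¹) (e.symm x)) = y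
    rw [← ha, St7Aux.rhoQ_mk]
    have : b * a⁻¹ * a = b := by group
    rw [this, hb, Equiv.apply_symm_apply]
  · -- distance at least one
    intro x y hne
    exact hd_one (e.symm x) (e.symm y) fun h => hne (e.symm.injective h)
  · -- infinite diameter
    intro C
    obtain ⟨n, hn⟩ := exists_nat_ge C
    obtain ⟨g, hg⟩ := St7Aux.exists_len_large V u hV hu hbig n
    refine ⟨e (Quotient.mk'' 1), e (Quotient.mk'' g), ?_⟩
    have hd : dist (e (Quotient.mk'' (1 : G))) (e (Quotient.mk'' g)) =
        St7Aux.dQ V u (Quotient.mk'' (1 : G)) (Quotient.mk'' g) := by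
      show St7Aux.dQ V u (e.symm (e (Quotient.mk'' (1 : G))))
        (e.symm (e (Quotient.mk'' g))) = _
      rw [Equiv.symm_apply_apply, Equiv.symm_apply_apply]
    rw [hd, St7Aux.dQ_mk, inv_one, one_mul]
    calc C ≤ (n : ℝ) := hn
      _ < (St7Aux.len V u g : ℝ) := by exact_mod_cast hg
end

section
/- Let G be a Polish group acting continuously by isometries on a countable metric space (X,d) with d(x,y) ≥ 1 for all distinct x, y ∈ X (so X is discrete), and assume some orbit is unbounded. Then there is a separable Hilbert space H and a continuous linear representation π : G → GL(H) which is unbounded, i.e., sup_{g∈G} ‖π(g)‖ = ∞. -/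
open scoped ENNReal
open Bornology

namespace S8

lemma two_toReal : (2 : ℝ≥0∞).toReal = 2 := by norm_num

lemma summable_sq {X : Type*} (f : lp (fun _ : X => ℝ) 2) :
    Summable fun x => ‖f x‖ ^ (2 : ℝ) := by
  have := (lp.memℓp f).summable (p := 2) (by norm_num)
  simpa [two_toReal] using this

lemma memT {X : Type*} (f : lp (fun _ : X => ℝ) 2) (c : X → ℝ) {C : ℝ}
    (hC : ∀ x, |c x| ≤ C) (e : Equiv.Perm X) :
    Memℓp (fun x => c x * f (e x)) 2 := by
  apply memℓp_gen
  rw [two_toReal]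
  have hs : Summable fun x => ‖f (e x)‖ ^ (2 : ℝ) := (e.summable_iff
    (f := fun x => ‖f x‖ ^ (2 : ℝ))).2 (summable_sq f)
  refine Summable.of_nonneg_of_le (fun x => Real.rpow_nonneg (norm_nonneg _) _)
    (fun x => ?_) (hs.mul_left (C ^ (2 : ℝ)))
  have h0 : (0:ℝ) ≤ C := le_trans (abs_nonneg _) (hC x)
  calc ‖c x * f (e x)‖ ^ (2:ℝ) ≤ (C * ‖f (e x)‖) ^ (2:ℝ) := by
        apply Real.rpow_le_rpow (norm_nonneg _) _ (by norm_num)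
        rw [norm_mul]
        exact mul_le_mul_of_nonneg_right ((Real.norm_eq_abs _).le.trans (hC x)) (norm_nonneg _)
    _ = C ^ (2:ℝ) * ‖f (e x)‖ ^ (2:ℝ) := Real.mul_rpow h0 (norm_nonneg _)

lemma normT {X : Type*} (f : lp (fun _ : X => ℝ) 2) (c : X → ℝ) {C : ℝ}
    (hC : ∀ x, |c x| ≤ C) (hC0 : 0 ≤ C) (e : Equiv.Perm X) :
    ‖(⟨fun x => c x * f (e x), memT f c hC e⟩ : lp (fun _ : X => ℝ) 2)‖ ≤ C * ‖f‖ := by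
  have hp : (0:ℝ) < (2 : ℝ≥0∞).toReal := by rw [two_toReal]; norm_num
  refine lp.norm_le_of_tsum_le hp (mul_nonneg hC0 (norm_nonneg _)) ?_
  rw [two_toReal]
  have hs : Summable fun x => ‖f (e x)‖ ^ (2 : ℝ) := (e.summable_iff
    (f := fun x => ‖f x‖ ^ (2 : ℝ))).2 (summable_sq f)
  have hbd : ∀ x : X, ‖c x * f (e x)‖ ^ (2:ℝ) ≤ C ^ (2:ℝ) * ‖f (e x)‖ ^ (2:ℝ) := by
    intro x
    calc ‖c x * f (e x)‖ ^ (2:ℝ) ≤ (C * ‖f (e x)‖) ^ (2:ℝ) := by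
          apply Real.rpow_le_rpow (norm_nonneg _) _ (by norm_num)
          rw [norm_mul]
          exact mul_le_mul_of_nonneg_right ((Real.norm_eq_abs _).le.trans (hC x)) (norm_nonneg _)
      _ = C ^ (2:ℝ) * ‖f (e x)‖ ^ (2:ℝ) := Real.mul_rpow hC0 (norm_nonneg _)
  have hsum : Summable fun x => ‖c x * f (e x)‖ ^ (2:ℝ) := by
    have := (memT f c hC e).summable (p := 2) (by norm_num)
    simpa [two_toReal] using this
  calc (∑' x, ‖(fun x => c x * f (e x)) x‖ ^ (2:ℝ))
      ≤ ∑' x, C ^ (2:ℝ) * ‖f (e x)‖ ^ (2:ℝ) := Summable.tsum_le_tsum hbd hsum (hs.mul_left _)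
    _ = C ^ (2:ℝ) * ∑' x, ‖f (e x)‖ ^ (2:ℝ) := tsum_mul_left
    _ = C ^ (2:ℝ) * ∑' x, ‖f x‖ ^ (2:ℝ) := by rw [e.tsum_eq (f := fun x => ‖f x‖ ^ (2:ℝ))]
    _ = C ^ (2:ℝ) * ‖f‖ ^ (2:ℝ) := by
        have := lp.norm_rpow_eq_tsum hp f
        rw [two_toReal] at this
        rw [this]
    _ = (C * ‖f‖) ^ (2:ℝ) := (Real.mul_rpow hC0 (norm_nonneg _)).symm


section wt
variable {G : Type*} [Group G] {X : Type*} [MetricSpace X] [MulAction G X]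

/-- The Busemann-type weight. -/
noncomputable def wt (x₀ : X) (g : G) (x : X) : ℝ :=
  Real.exp (dist x (g • x₀) - dist x x₀)

lemma wt_pos (x₀ : X) (g : G) (x : X) : 0 < wt x₀ g x := Real.exp_pos _

lemma wt_le (x₀ : X) (g : G) (x : X) : |wt x₀ g x| ≤ Real.exp (dist x₀ (g • x₀)) := by
  rw [abs_of_pos (wt_pos x₀ g x)]
  apply Real.exp_le_exp.2
  have := dist_triangle x x₀ (g • x₀)
  linarith

lemma wt_one (x₀ x : X) : wt x₀ (1 : G) x = 1 := by
  simp [wt]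

lemma wt_cocycle (hiso : ∀ g : G, Isometry fun x : X => g • x) (x₀ : X) (g h : G) (x : X) :
    wt x₀ (g * h) x = wt x₀ g x * wt x₀ h (g⁻¹ • x) := by
  rw [wt, wt, wt, ← Real.exp_add]
  congr 1
  have h1 : dist (g⁻¹ • x) (h • x₀) = dist x ((g * h) • x₀) := by
    have := (hiso g).dist_eq (g⁻¹ • x) (h • x₀)
    simpa [smul_smul] using this.symm
  have h2 : dist (g⁻¹ • x) x₀ = dist x (g • x₀) := by
    have := (hiso g).dist_eq (g⁻¹ • x) x₀
    simpa [smul_smul] using this.symm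
  rw [h1, h2]
  ring

end wt

section op
variable {G : Type*} [Group G] {X : Type*} [MetricSpace X] [MulAction G X]

/-- The weighted translation operator on `ℓ²(X)`. -/
noncomputable def Top (x₀ : X) (g : G) :
    lp (fun _ : X => ℝ) 2 →L[ℝ] lp (fun _ : X => ℝ) 2 :=
  LinearMap.mkContinuous
    { toFun := fun f => (⟨fun x => wt x₀ g x * f (g⁻¹ • x),
        memT f (wt x₀ g) (wt_le x₀ g) (MulAction.toPerm g⁻¹)⟩ : lp (fun _ : X => ℝ) 2)
      map_add' := fun f f' => by
        apply lp.ext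
        funext x
        simp only [lp.coeFn_add, Pi.add_apply]
        ring
      map_smul' := fun c f => by
        apply lp.ext
        funext x
        simp only [lp.coeFn_smul, Pi.smul_apply, RingHom.id_apply, smul_eq_mul]
        ring }
    (Real.exp (dist x₀ (g • x₀)))
    (fun f => normT f (wt x₀ g) (wt_le x₀ g) (Real.exp_nonneg _) (MulAction.toPerm g⁻¹))

lemma Top_apply (x₀ : X) (g : G) (f : lp (fun _ : X => ℝ) 2) (x : X) :
    Top x₀ g f x = wt x₀ g x * f (g⁻¹ • x) := rfl

lemma Top_norm_le (x₀ : X) (g : G) : ‖Top x₀ g‖ ≤ Real.exp (dist x₀ (g • x₀)) :=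
  LinearMap.mkContinuous_norm_le _ (Real.exp_nonneg _) _

lemma Top_comp (hiso : ∀ g : G, Isometry fun x : X => g • x) (x₀ : X) (g h : G)
    (f : lp (fun _ : X => ℝ) 2) :
    Top x₀ g (Top x₀ h f) = Top x₀ (g * h) f := by
  apply lp.ext
  funext x
  rw [Top_apply, Top_apply, Top_apply, wt_cocycle hiso x₀ g h x]
  have : h⁻¹ • g⁻¹ • x = (g * h)⁻¹ • x := by rw [smul_smul, mul_inv_rev]
  rw [this]
  ring

lemma Top_one (x₀ : X) (f : lp (fun _ : X => ℝ) 2) : Top x₀ (1 : G) f = f := by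
  apply lp.ext
  funext x
  rw [Top_apply, wt_one, inv_one, one_smul, one_mul]

end op

section single
variable {G : Type*} [Group G] {X : Type*} [MetricSpace X] [MulAction G X] [DecidableEq X]

lemma Top_single (hiso : ∀ g : G, Isometry fun x : X => g • x) (x₀ : X) (g : G) (y : X) (c : ℝ) :
    Top x₀ g (lp.single 2 y c) =
      lp.single 2 (g • y) (Real.exp (dist y x₀ - dist (g • y) x₀) * c) := by
  apply lp.ext
  funext x
  rw [Top_apply]
  by_cases hx : x = g • y
  · subst hx
    rw [lp.single_apply_self]
    have h1 : g⁻¹ • g • y = y := inv_smul_smul g y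
    rw [h1, lp.single_apply_self]
    congr 1
    rw [wt]
    congr 1
    have h2 : dist (g • y) (g • x₀) = dist y x₀ := (hiso g).dist_eq y x₀
    rw [h2]
  · rw [lp.single_apply_ne _ _ _ hx]
    have h1 : g⁻¹ • x ≠ y := by
      intro h
      apply hx
      rw [← h, smul_inv_smul]
    rw [lp.single_apply_ne _ _ _ h1, mul_zero]

lemma Top_norm_ge (hiso : ∀ g : G, Isometry fun x : X => g • x) (x₀ : X) (g : G) :
    Real.exp (dist x₀ (g • x₀)) ≤ ‖Top x₀ g‖ := by
  have hp : (0:ℝ) < (2 : ℝ≥0∞).toReal := by rw [two_toReal]; norm_num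
  set v : lp (fun _ : X => ℝ) 2 := lp.single 2 (g⁻¹ • x₀) (1 : ℝ) with hv
  have hvnorm : ‖v‖ = 1 := by
    have := lp.norm_single (p := 2) (E := fun _ : X => ℝ) (by norm_num) (g⁻¹ • x₀) (1:ℝ)
    rw [hv, this]; simp
  have hTv : Top x₀ g v = lp.single 2 x₀ (Real.exp (dist x₀ (g • x₀))) := by
    rw [hv, Top_single hiso]
    have h1 : g • g⁻¹ • x₀ = x₀ := smul_inv_smul g x₀
    rw [h1]
    congr 1
    have h2 : dist (g⁻¹ • x₀) x₀ = dist x₀ (g • x₀) := by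
      have := (hiso g).dist_eq (g⁻¹ • x₀) x₀
      rw [h1] at this
      exact this.symm
    rw [h2, dist_self, sub_zero, mul_one]
  have hTvnorm : ‖Top x₀ g v‖ = Real.exp (dist x₀ (g • x₀)) := by
    rw [hTv]
    have := lp.norm_single (p := 2) (E := fun _ : X => ℝ) (by norm_num) x₀ (Real.exp (dist x₀ (g • x₀)))
    simpa [abs_of_pos (Real.exp_pos _)] using this
  have := (Top x₀ g).le_opNorm v
  rw [hTvnorm, hvnorm, mul_one] at this
  exact this

end single

section sep

lemma lp_separable (X : Type*) [Countable X] :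
    TopologicalSpace.SeparableSpace (lp (fun _ : X => ℝ) 2) := by
  classical
  haveI : Fact ((1:ℝ≥0∞) ≤ 2) := ⟨by norm_num⟩
  set S : Set (lp (fun _ : X => ℝ) 2) := Set.range fun i : X => lp.single 2 i (1 : ℝ) with hS
  have hsp : TopologicalSpace.IsSeparable
      (Submodule.span ℝ S : Set (lp (fun _ : X => ℝ) 2)) :=
    (Set.countable_range _).isSeparable.span
  have hdense : Dense (Submodule.span ℝ S : Set (lp (fun _ : X => ℝ) 2)) := by
    intro f
    have hsum := lp.hasSum_single (E := fun _ : X => ℝ) (p := 2) (by norm_num) f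
    refine mem_closure_of_tendsto hsum (Filter.Eventually.of_forall fun s => ?_)
    refine Submodule.sum_mem _ fun i _ => ?_
    have h1 : lp.single 2 i (f i) =
        (f i : ℝ) • (lp.single 2 i (1 : ℝ) : lp (fun _ : X => ℝ) 2) := by
      apply lp.ext
      funext j
      rw [lp.coeFn_smul, Pi.smul_apply]
      by_cases hj : j = i
      · subst hj
        rw [lp.single_apply_self, lp.single_apply_self]
        simp
      · rw [lp.single_apply_ne _ _ _ hj, lp.single_apply_ne _ _ _ hj]
        simp
    rw [h1]
    exact Submodule.smul_mem _ _ (Submodule.subset_span ⟨i, rfl⟩)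
  obtain ⟨c, hc, hcc⟩ := hsp
  refine ⟨⟨c, hc, ?_⟩⟩
  have h2 : (Set.univ : Set (lp (fun _ : X => ℝ) 2)) ⊆ closure c := by
    rw [← hdense.closure_eq]
    exact closure_minimal hcc isClosed_closure
  rw [dense_iff_closure_eq]
  exact Set.eq_univ_of_univ_subset h2

end sep

section contin
variable {G : Type*} [Group G] [TopologicalSpace G]
    {X : Type*} [MetricSpace X] [MulAction G X] [DecidableEq X]

lemma Top_continuous
    (hcont : Continuous fun p : G × X => p.1 • p.2)
    (hiso : ∀ g : G, Isometry fun x : X => g • x)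
    (hsep : ∀ x y : X, x ≠ y → 1 ≤ dist x y)
    (x₀ : X) :
    Continuous fun p : G × lp (fun _ : X => ℝ) 2 => Top x₀ p.1 p.2 := by
  haveI : Fact ((1:ℝ≥0∞) ≤ 2) := ⟨by norm_num⟩
  have hsing : ∀ x : X, IsOpen ({x} : Set X) := by
    intro x
    have h : ({x} : Set X) = Metric.ball x 1 := by
      ext z
      simp only [Set.mem_singleton_iff, Metric.mem_ball]
      constructor
      · rintro rfl; simp
      · intro hz
        by_contra hne
        exact absurd hz (not_lt.2 (hsep z x hne))
    rw [h]; exact Metric.isOpen_ball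
  have horb : ∀ y : X, Continuous fun g : G => g • y := fun y =>
    hcont.comp (continuous_id.prodMk continuous_const)
  rw [continuous_iff_continuousAt]
  rintro ⟨g₀, v₀⟩
  set M := Real.exp (dist x₀ (g₀ • x₀)) with hM
  have hM0 : 0 < M := Real.exp_pos _
  have hbound : ∀ g : G, g • x₀ = g₀ • x₀ → ∀ u : lp (fun _ : X => ℝ) 2,
      ‖Top x₀ g u‖ ≤ M * ‖u‖ := by
    intro g hg u
    refine ((Top x₀ g).le_opNorm u).trans ?_
    apply mul_le_mul_of_nonneg_right _ (norm_nonneg u)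
    calc ‖Top x₀ g‖ ≤ Real.exp (dist x₀ (g • x₀)) := Top_norm_le x₀ g
      _ = M := by rw [hM, hg]
  unfold ContinuousAt
  rw [Metric.tendsto_nhds]
  intro ε hε
  set δ := ε / (4 * M) with hδ
  have hδ0 : 0 < δ := div_pos hε (by positivity)
  have hsum := lp.hasSum_single (E := fun _ : X => ℝ) (p := 2) (by norm_num) v₀
  obtain ⟨s, hs⟩ := (Metric.tendsto_nhds.1 hsum δ hδ0).exists
  set w : lp (fun _ : X => ℝ) 2 := ∑ i ∈ s, lp.single 2 i (v₀ i) with hw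
  have hwv : ‖w - v₀‖ < δ := by
    rw [← dist_eq_norm]; exact hs
  set V : Set G := {g | g • x₀ = g₀ • x₀} ∩ ⋂ i ∈ s, {g | g • i = g₀ • i} with hV
  have hVopen : IsOpen V := by
    apply IsOpen.inter
    · exact (hsing (g₀ • x₀)).preimage (horb x₀)
    · exact isOpen_biInter_finset fun i _ => (hsing (g₀ • i)).preimage (horb i)
  have hg₀V : g₀ ∈ V := ⟨rfl, Set.mem_biInter fun i _ => rfl⟩
  have hTw : ∀ g ∈ V, Top x₀ g w = Top x₀ g₀ w := by
    intro g hg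
    rw [hw, map_sum, map_sum]
    refine Finset.sum_congr rfl fun i hi => ?_
    rw [Top_single hiso, Top_single hiso]
    have hgi : g • i = g₀ • i := by
      have h2 := hg.2
      rw [Set.mem_iInter₂] at h2
      exact h2 i hi
    rw [hgi]
  filter_upwards [prod_mem_nhds (hVopen.mem_nhds hg₀V) (Metric.ball_mem_nhds v₀ hδ0)]
  rintro ⟨g, v⟩ ⟨hgV, hvball⟩
  rw [dist_eq_norm]
  have hdec : Top x₀ g v - Top x₀ g₀ v₀ =
      Top x₀ g (v - v₀) + Top x₀ g (v₀ - w) + Top x₀ g₀ (w - v₀) := by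
    rw [map_sub, map_sub, map_sub, hTw g hgV]
    abel
  rw [hdec]
  have h1 : ‖Top x₀ g (v - v₀)‖ ≤ M * δ := by
    refine (hbound g hgV.1 _).trans ?_
    apply mul_le_mul_of_nonneg_left _ hM0.le
    rw [← dist_eq_norm]
    exact (Metric.mem_ball.1 hvball).le
  have h2 : ‖Top x₀ g (v₀ - w)‖ ≤ M * δ := by
    refine (hbound g hgV.1 _).trans ?_
    apply mul_le_mul_of_nonneg_left _ hM0.le
    rw [← norm_neg, neg_sub]
    exact hwv.le
  have h3 : ‖Top x₀ g₀ (w - v₀)‖ ≤ M * δ :=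
    (hbound g₀ rfl _).trans (mul_le_mul_of_nonneg_left hwv.le hM0.le)
  have htri := norm_add₃_le (E := lp (fun _ : X => ℝ) 2)
    (a := Top x₀ g (v - v₀)) (b := Top x₀ g (v₀ - w)) (c := Top x₀ g₀ (w - v₀))
  have hMδ : M * δ = ε / 4 := by
    rw [hδ]
    field_simp
  rw [hMδ] at h1 h2 h3
  linarith

end contin

theorem statement8_aux {G : Type*} [Group G] [TopologicalSpace G] [IsTopologicalGroup G]
    {X : Type} [MetricSpace X] [Countable X] [MulAction G X]
    (hcont : Continuous fun p : G × X => p.1 • p.2)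
    (hiso : ∀ g : G, Isometry fun x : X => g • x)
    (hsep : ∀ x y : X, x ≠ y → 1 ≤ dist x y)
    (hunb : ∃ x : X, ¬ Bornology.IsBounded (Set.range fun g : G => g • x)) :
    ∃ (H : Type) (_ : NormedAddCommGroup H) (_ : InnerProductSpace ℝ H) (_ : CompleteSpace H)
      (_ : TopologicalSpace.SeparableSpace H) (π : G →* (H ≃L[ℝ] H)),
      Continuous (fun p : G × H => π p.1 p.2) ∧
      (∀ C : ℝ, ∃ g : G, C < ‖(π g : H →L[ℝ] H)‖) := by
  classical
  obtain ⟨x₀, hx₀⟩ := hunb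
  have hli : ∀ g : G, Function.LeftInverse (Top x₀ g⁻¹) (Top x₀ g) := fun g f => by
    rw [Top_comp hiso, inv_mul_cancel, Top_one]
  have hri : ∀ g : G, Function.RightInverse (Top x₀ g⁻¹) (Top x₀ g) := fun g f => by
    rw [Top_comp hiso, mul_inv_cancel, Top_one]
  let E : G → (lp (fun _ : X => ℝ) 2 ≃L[ℝ] lp (fun _ : X => ℝ) 2) := fun g =>
    ContinuousLinearEquiv.equivOfInverse (Top x₀ g) (Top x₀ g⁻¹) (hli g) (hri g)
  let π : G →* (lp (fun _ : X => ℝ) 2 ≃L[ℝ] lp (fun _ : X => ℝ) 2) :=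
    MonoidHom.mk' E (fun g h => by
      apply ContinuousLinearEquiv.ext
      funext f
      show Top x₀ (g * h) f = Top x₀ g (Top x₀ h f)
      rw [Top_comp hiso])
  refine ⟨lp (fun _ : X => ℝ) 2, inferInstance, inferInstance, inferInstance,
    lp_separable X, π, ?_, ?_⟩
  · exact Top_continuous hcont hiso hsep x₀
  · intro C
    have hex : ∃ g : G, C < dist (g • x₀) x₀ := by
      by_contra hcon
      push_neg at hcon
      apply hx₀
      rw [Metric.isBounded_iff_subset_closedBall x₀]
      exact ⟨C, by rintro _ ⟨g, rfl⟩; exact Metric.mem_closedBall.2 (hcon g)⟩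
    obtain ⟨g, hg⟩ := hex
    refine ⟨g, ?_⟩
    have h1 : Real.exp (dist x₀ (g • x₀)) ≤ ‖Top x₀ g‖ := Top_norm_ge hiso x₀ g
    have h2 : dist x₀ (g • x₀) + 1 ≤ Real.exp (dist x₀ (g • x₀)) := Real.add_one_le_exp _
    have hco : ((π g : lp (fun _ : X => ℝ) 2 →L[ℝ] lp (fun _ : X => ℝ) 2)) = Top x₀ g := rfl
    rw [hco]
    rw [dist_comm] at hg
    linarith



end S8

/-- Let `G` be a Polish group acting continuously by isometries on a countable
metric space `(X, d)` with `d(x,y) ≥ 1` for all distinct `x, y` (so `X` is discrete), with some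
unbounded orbit. Then there are a separable Hilbert space `H` and a continuous linear
representation `π : G → GL(H)` which is unbounded, i.e. `sup_{g ∈ G} ‖π(g)‖ = ∞`. -/
theorem statement8 {G : Type*} [Group G] [TopologicalSpace G] [IsTopologicalGroup G] [PolishSpace G]
    {X : Type*} [MetricSpace X] [Countable X] [MulAction G X]
    (hcont : Continuous fun p : G × X => p.1 • p.2)
    (hiso : ∀ g : G, Isometry fun x : X => g • x)
    (hsep : ∀ x y : X, x ≠ y → 1 ≤ dist x y)
    (hunb : ∃ x : X, ¬ Bornology.IsBounded (Set.range fun g : G => g • x)) :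
    ∃ (H : Type) (_ : NormedAddCommGroup H) (_ : InnerProductSpace ℝ H) (_ : CompleteSpace H)
      (_ : TopologicalSpace.SeparableSpace H) (π : G →* (H ≃L[ℝ] H)),
      Continuous (fun p : G × H => π p.1 p.2) ∧
      (∀ C : ℝ, ∃ g : G, C < ‖(π g : H →L[ℝ] H)‖) := by
  classical
  haveI hsmall : Small.{0} X := Countable.toSmall X
  let Y : Type := Shrink.{0} X
  let ee : X ≃ Y := equivShrink.{0} X
  haveI : Countable Y := Countable.of_equiv X ee
  letI : MetricSpace Y := MetricSpace.induced (fun y => ee.symm y) ee.symm.injective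
    (inferInstance : MetricSpace X)
  have hdistY : ∀ y y' : Y, dist y y' = dist (ee.symm y) (ee.symm y') := fun _ _ => rfl
  have hisoY : Isometry (fun y : Y => ee.symm y) := Isometry.of_dist_eq fun _ _ => rfl
  have heeiso : Isometry (fun x : X => ee x) := Isometry.of_dist_eq fun a b => by
    rw [hdistY, ee.symm_apply_apply, ee.symm_apply_apply]
  letI : MulAction G Y :=
    { toSMul := inferInstance
      one_smul := fun y => by
        apply ee.symm.injective
        rw [equivShrink_symm_smul, one_smul]
      mul_smul := fun g h y => by
        apply ee.symm.injective
        rw [equivShrink_symm_smul, equivShrink_symm_smul, equivShrink_symm_smul, mul_smul] }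
  have hsmulY : ∀ (g : G) (y : Y), g • y = ee (g • ee.symm y) := fun g y => by
    apply ee.symm.injective
    rw [equivShrink_symm_smul, ee.symm_apply_apply]
  have hcontY : Continuous fun p : G × Y => p.1 • p.2 := by
    have h : (fun p : G × Y => p.1 • p.2) =
        (fun x : X => ee x) ∘ (fun p : G × X => p.1 • p.2) ∘
          (fun p : G × Y => (p.1, ee.symm p.2)) := by
      funext p
      show p.1 • p.2 = ee (p.1 • ee.symm p.2)
      exact hsmulY p.1 p.2
    rw [h]
    exact heeiso.continuous.comp (hcont.comp
      (continuous_fst.prodMk (hisoY.continuous.comp continuous_snd)))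
  have hisoY' : ∀ g : G, Isometry fun y : Y => g • y := fun g =>
    Isometry.of_dist_eq fun a b => by
      rw [hsmulY, hsmulY, hdistY, ee.symm_apply_apply, ee.symm_apply_apply,
        (hiso g).dist_eq, ← hdistY]
  have hsepY : ∀ a b : Y, a ≠ b → 1 ≤ dist a b := fun a b hab => by
    rw [hdistY]
    exact hsep _ _ (fun h => hab (ee.symm.injective h))
  have hunbY : ∃ y : Y, ¬ Bornology.IsBounded (Set.range fun g : G => g • y) := by
    obtain ⟨x, hx⟩ := hunb
    refine ⟨ee x, fun hb => hx ?_⟩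
    have hcomp : (fun y : Y => ee.symm y) ∘ (fun g : G => g • ee x) =
        fun g : G => g • x := by
      funext g
      show ee.symm (g • ee x) = g • x
      rw [equivShrink_symm_smul, ee.symm_apply_apply]
    rw [← hcomp, Set.range_comp]
    exact hisoY.lipschitz.isBounded_image hb
  exact S8.statement8_aux hcontY hisoY' hsepY hunbY
end
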